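/- arXiv:1806.08356 — 12 statements merged into one kernel-verified Lean document; each statement's English description precedes it below -/
import Mathlib

section
/- (Proposition 1) Let m ∈ F be a nonisotropic cycle with ⟨m, p⟩ = 0 which has a zero point in E, i.e., there exists u ∈ E with ⟨m, q(u)⟩ = 0. Then ⟨m, m⟩ > 0, and the set {u ∈ H : ⟨m, q(u)⟩ = 0} of zero points of m in H is infinite. -/
variable {K : Type*} [Field K] [LinearOrder K] [IsStrictOrderedRing K]
variable {E : Type*} [AddCommGroup E] [Module K E]

/-- The cycle pairing on the space of cycles `F = K × E × K`:
`⟨(a,b,c),(a',b',c')⟩ = B(b,b') − 2ac' − 2a'c`. -/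
def cyc (B : LinearMap.BilinForm K E) (f g : K × E × K) : K :=
  B f.2.1 g.2.1 - 2 * f.1 * g.2.2 - 2 * g.1 * f.2.2

/-- The normalized zero circle centered at `u`: the cycle `(1, −2u, B(u,u))`. -/
def qc (B : LinearMap.BilinForm K E) (u : E) : K × E × K :=
  (1, (-2 : K) • u, B u u)

/-- Proposition 1: a nonisotropic cycle orthogonal to `p` having a zero point in `E`
has positive norm and infinitely many zero points in the half-plane `H`. -/
theorem prop1_pos_norm_and_infinite_zero_points
    (B : LinearMap.BilinForm K E)
    (heuc : ∀ x : K, 0 ≤ x → ∃ y : K, y * y = x)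
    (hdim : Module.finrank K E = 2)
    (hsymm : ∀ x y : E, B x y = B y x)
    (hpos : ∀ x : E, x ≠ 0 → 0 < B x x)
    (i : E) (hi : B i i = 1)
    (m : K × E × K) (hm : cyc B m m ≠ 0)
    (hmp : cyc B m ((0 : K), i, (0 : K)) = 0)
    (hzero : ∃ u : E, cyc B m (qc B u) = 0) :
    0 < cyc B m m ∧ {u : E | B i u < 0 ∧ cyc B m (qc B u) = 0}.Infinite := by
  obtain ⟨a, b, c⟩ := m
  have hnn : ∀ x : E, 0 ≤ B x x := by
    intro x
    by_cases hx : x = 0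
    · simp [hx]
    · exact (hpos x hx).le
  have hsqrt : ∀ x : K, 0 ≤ x → ∃ y : K, 0 ≤ y ∧ y * y = x := by
    intro x hx
    obtain ⟨y, hy⟩ := heuc x hx
    rcases le_total 0 y with h | h
    · exact ⟨y, h, hy⟩
    · exact ⟨-y, by linarith, by nlinarith⟩
  have hbi : B b i = 0 := by simpa [cyc] using hmp
  have hib : B i b = 0 := (hsymm i b).trans hbi
  obtain ⟨u, hu⟩ := hzero
  -- hu expanded
  have hu' : -2 * B b u - 2 * a * B u u - 2 * c = 0 := by
    simpa [cyc, qc, map_smul, smul_eq_mul] using hu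
  -- Part 1 : positivity
  have hpart1 : 0 < cyc B (a, b, c) (a, b, c) := by
    rcases eq_or_ne a 0 with ha | ha
    · subst ha
      have : cyc B ((0:K), b, c) ((0:K), b, c) = B b b := by simp [cyc]
      rw [this]
      rw [this] at hm
      exact (hnn b).lt_of_ne' hm
    · set v := u + ((2*a)⁻¹) • b with hv
      have hvv : 0 ≤ B v v := hnn v
      have hexp : B v v = B u u + (2*a)⁻¹ * B b u + (2*a)⁻¹ * B u b + (2*a)⁻¹ * ((2*a)⁻¹ * B b b) := by
        simp [hv, map_add, map_smul, smul_eq_mul]; ring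
      have hub : B u b = B b u := hsymm u b
      have h4 : (2*a)*(2*a) * B v v = B b b - 4*(a*c) := by
        rw [hexp, hub]
        field_simp
        linear_combination (-2*a)*hu'
      have : cyc B (a, b, c) (a, b, c) = B b b - 4*(a*c) := by simp [cyc]; ring
      rw [this]
      rw [this] at hm
      have h0 : 0 ≤ B b b - 4*(a*c) := by nlinarith [sq_nonneg (2*a)]
      exact h0.lt_of_ne' hm
  refine ⟨hpart1, ?_⟩
  -- Part 2 : infinitude
  rcases eq_or_ne a 0 with ha | ha
  · -- line case
    subst ha
    have hbb : (0:K) < B b b := by simpa [cyc] using hpart1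
    have hb0 : b ≠ 0 := fun h => by rw [h] at hbb; simp at hbb
    set u0 : E := (-c / B b b) • b with hu0
    have hbu0 : B b u0 = -c := by
      rw [hu0, map_smul, smul_eq_mul]; field_simp
    set f : K → E := fun t => u0 + t • i with hf
    have hBif : ∀ t, B i (f t) = B i u0 + t := by
      intro t; simp [hf, map_add, map_smul, smul_eq_mul, hi]
    have hmem : ∀ t ∈ Set.Iio (-(B i u0)), f t ∈ {u : E | B i u < 0 ∧ cyc B ((0:K), b, c) (qc B u) = 0} := by
      intro t ht
      constructor
      · rw [hBif]; simp only [Set.mem_Iio] at ht; linarith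
      · simp only [cyc, qc, hf, map_add, map_smul, smul_eq_mul]
        simp [hbu0, hbi]
    have hinj : Set.InjOn f (Set.Iio (-(B i u0))) := by
      intro s _ t _ hst
      have := congrArg (B i) hst
      rw [hBif, hBif] at this
      linarith
    exact Set.Infinite.mono (Set.image_subset_iff.mpr hmem) ((Set.Iio_infinite _).image hinj)
  · -- circle case
    have hine : i ≠ 0 := by
      intro h; rw [h] at hi; simp at hi
    have hex : ¬ ∀ e : E, e ∈ Submodule.span K {i} := by
      intro h
      have hsp : Submodule.span K {i} = ⊤ := eq_top_iff.mpr fun x _ => h x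
      have h1 : Module.finrank K (Submodule.span K {i}) = 1 := finrank_span_singleton hine
      rw [hsp, finrank_top] at h1
      omega
    push_neg at hex
    obtain ⟨e, he⟩ := hex
    set j0 : E := e - (B i e) • i with hj0
    have hj0ne : j0 ≠ 0 := by
      intro h
      exact he (Submodule.mem_span_singleton.mpr ⟨B i e, (sub_eq_zero.mp h).symm⟩)
    have hij0 : B i j0 = 0 := by
      simp [hj0, map_sub, map_smul, smul_eq_mul, hi]
    obtain ⟨s, hs0, hs⟩ := hsqrt (B j0 j0) (hnn j0)
    have hsne : s ≠ 0 := by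
      intro h; rw [h] at hs; simp at hs
      exact (hpos j0 hj0ne).ne' hs.symm
    set j : E := s⁻¹ • j0 with hjdef
    have hij : B i j = 0 := by simp [hjdef, map_smul, smul_eq_mul, hij0]
    have hji : B j i = 0 := (hsymm j i).trans hij
    have hjj : B j j = 1 := by
      simp only [hjdef, map_smul, LinearMap.smul_apply, smul_eq_mul]
      rw [← hs]; field_simp
    set w : E := (-(2*a)⁻¹) • b with hwdef
    have hb : b = (-(2*a)) • w := by
      rw [hwdef, smul_smul]
      rw [show (-(2*a)) * (-(2*a)⁻¹) = (2*a) * (2*a)⁻¹ by ring]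
      rw [mul_inv_cancel₀ (by simpa using ha : (2:K)*a ≠ 0), one_smul]
    have hiw : B i w = 0 := by
      simp [hwdef, map_smul, smul_eq_mul, hib]
    have hwi : B w i = 0 := (hsymm w i).trans hiw
    have hbw : B b w = -(2*a) * B w w := by
      rw [hb]
      simp only [map_smul, LinearMap.smul_apply, smul_eq_mul]
    have hbj : B b j = -(2*a) * B w j := by
      rw [hb]
      simp only [map_smul, LinearMap.smul_apply, smul_eq_mul]
    have hjw : B j w = B w j := hsymm j w
    have hBbb : B b b = (2*a) * ((2*a) * B w w) := by
      nth_rewrite 1 [hb]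
      nth_rewrite 1 [hb]
      simp only [map_smul, LinearMap.smul_apply, smul_eq_mul]
      ring
    clear_value j0 j w
    have hnum : (0:K) < B b b - 4*(a*c) := by
      have hcm : cyc B (a, b, c) (a, b, c) = B b b - 4*(a*c) := by simp [cyc]; ring
      rw [hcm] at hpart1; exact hpart1
    have h2a : (2:K)*a ≠ 0 := by simpa using ha
    have hden : (0:K) < (2*a)*(2*a) := mul_self_pos.mpr h2a
    have ht : (0:K) < (B b b - 4*(a*c))/((2*a)*(2*a)) := div_pos hnum hden
    obtain ⟨r, hr0, hrr⟩ := hsqrt _ ht.le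
    have hrpos : 0 < r := by
      rcases hr0.eq_or_lt with h | h
      · exfalso; rw [← h] at hrr; simp at hrr; rw [← hrr] at ht; simp at ht
      · exact h
    have hart2 : a * (r*r) = a * B w w - c := by
      rw [hrr, hBbb]
      field_simp
      ring
    have hy : ∀ x : K, ∃ y : K, x ∈ Set.Ioo (-r) 0 → y * y = r*r - x*x := by
      intro x
      by_cases hx : x ∈ Set.Ioo (-r) 0
      · obtain ⟨hx1, hx2⟩ := hx
        have h1 : 0 ≤ -x := by linarith
        have h2 : -x < r := by linarith
        have h3 := mul_self_lt_mul_self h1 h2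
        rw [neg_mul_neg] at h3
        obtain ⟨y, hy⟩ := heuc (r*r - x*x) (by linarith)
        exact ⟨y, fun _ => hy⟩
      · exact ⟨0, fun h => absurd h hx⟩
    choose y hyy using hy
    have hf : ∀ x : K, (fun x => w + x • i + (y x) • j) x = w + x • i + (y x) • j := fun _ => rfl
    set f : K → E := fun x => w + x • i + (y x) • j with hfdef
    have hBif : ∀ x, B i (f x) = x := by
      intro x
      simp [hf, map_add, map_smul, smul_eq_mul, hiw, hi, hij]
    have hmem : ∀ x ∈ Set.Ioo (-r) 0, f x ∈ {u : E | B i u < 0 ∧ cyc B (a, b, c) (qc B u) = 0} := by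
      intro x hx
      refine ⟨by rw [hBif]; exact hx.2, ?_⟩
      have hq : a * (x*x + y x * y x) = a * B w w - c := by
        rw [hyy x hx]
        linear_combination hart2
      simp only [cyc, qc, hf, map_add, map_smul, LinearMap.add_apply, LinearMap.smul_apply,
        smul_eq_mul]
      rw [hbw, hbi, hbj, hiw, hwi, hjw, hi, hji, hij, hjj]
      linear_combination (-2)*hq
    have hinj : Set.InjOn f (Set.Ioo (-r) 0) := by
      intro s1 _ s2 _ hst
      have := congrArg (B i) hst
      rwa [hBif, hBif] at this
    exact Set.Infinite.mono (Set.image_subset_iff.mpr hmem)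
      ((Set.Ioo_infinite (by linarith)).image hinj)
end

section
/- For any three pairwise distinct points u, v, w ∈ E, the cycles q(u), q(v), q(w) are linearly independent in F. -/
variable {K : Type*} [Field K] [LinearOrder K] [IsStrictOrderedRing K]
variable {E : Type*} [AddCommGroup E] [Module K E]

/-- For pairwise distinct `u, v, w ∈ E`, the cycles `q(u), q(v), q(w)` are linearly
independent in `F`. -/
theorem qc_linearIndependent
    (B : LinearMap.BilinForm K E)
    (heuc : ∀ x : K, 0 ≤ x → ∃ y : K, y * y = x)
    (hdim : Module.finrank K E = 2)
    (hsymm : ∀ x y : E, B x y = B y x)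
    (hpos : ∀ x : E, x ≠ 0 → 0 < B x x)
    (u v w : E) (huv : u ≠ v) (huw : u ≠ w) (hvw : v ≠ w) :
    LinearIndependent K ![qc B u, qc B v, qc B w] := by
  rw [Fintype.linearIndependent_iff]
  intro g hg
  set a := g 0 with ha
  set b := g 1 with hb
  set c := g 2 with hc
  have hsum : a • qc B u + b • qc B v + c • qc B w = 0 := by
    simpa [Fin.sum_univ_three] using hg
  have h1 : a + b + c = 0 := by
    have := congrArg (fun p : K × E × K => p.1) hsum
    simpa [qc, mul_one] using this
  have h2 : a • u + b • v + c • w = 0 := by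
    have h := congrArg (fun p : K × E × K => p.2.1) hsum
    simp only [qc, Prod.snd_add, Prod.fst_add, Prod.smul_snd, Prod.smul_fst,
      Prod.fst_zero, Prod.snd_zero] at h
    have h' : (-2 : K) • (a • u + b • v + c • w) = (0 : E) := by
      rw [smul_add, smul_add]
      rw [smul_comm ((-2:K)) a, smul_comm ((-2:K)) b, smul_comm ((-2:K)) c]
      exact h
    rcases smul_eq_zero.mp h' with h0 | h0
    · exact absurd h0 (by norm_num)
    · exact h0
  have h3 : a * B u u + b * B v v + c * B w w = 0 := by
    have := congrArg (fun p : K × E × K => p.2.2) hsum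
    simpa [qc, smul_eq_mul] using this
  have hB : ∀ p : E, a * B u p + b * B v p + c * B w p = 0 := by
    intro p
    have := congrArg (fun x : E => B x p) h2
    simpa [map_add, map_smul, LinearMap.add_apply, LinearMap.smul_apply,
      smul_eq_mul] using this
  have hexp : ∀ x p : E, B (x - p) (x - p) = B x x - 2 * B x p + B p p := by
    intro x p
    have hs := hsymm x p
    simp only [map_sub, LinearMap.sub_apply]
    rw [hs]; ring
  have key : ∀ p : E,
      a * B (u - p) (u - p) + b * B (v - p) (v - p) + c * B (w - p) (w - p) = 0 := by
    intro p
    rw [hexp, hexp, hexp]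
    linear_combination h3 - 2 * (hB p) + B p p * h1
  set α := B (u - v) (u - v) with hα
  set β := B (u - w) (u - w) with hβ
  set γ := B (v - w) (v - w) with hγ
  have hαpos : 0 < α := hpos _ (sub_ne_zero.mpr huv)
  have hβpos : 0 < β := hpos _ (sub_ne_zero.mpr huw)
  have hγpos : 0 < γ := hpos _ (sub_ne_zero.mpr hvw)
  have hvu : B (v - u) (v - u) = α := by
    rw [hα]; simp only [map_sub, LinearMap.sub_apply]; rw [hsymm v u]; ring
  have hwu : B (w - u) (w - u) = β := by
    rw [hβ]; simp only [map_sub, LinearMap.sub_apply]; rw [hsymm w u]; ring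
  have hwv : B (w - v) (w - v) = γ := by
    rw [hγ]; simp only [map_sub, LinearMap.sub_apply]; rw [hsymm w v]; ring
  have e1 : b * α + c * β = 0 := by
    have := key u
    rw [sub_self] at this
    simp only [map_zero, LinearMap.zero_apply] at this
    rw [hvu, hwu] at this
    linarith
  have e2 : a * α + c * γ = 0 := by
    have := key v
    rw [sub_self] at this
    simp only [map_zero, LinearMap.zero_apply] at this
    rw [hwv] at this
    linarith
  have e3 : a * β + b * γ = 0 := by
    have := key w
    rw [sub_self] at this
    simp only [map_zero, LinearMap.zero_apply] at this
    linarith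
  have hc0 : c = 0 := by
    have h : 2 * c * (β * γ) = 0 := by linear_combination γ * e1 + β * e2 - α * e3
    have := mul_pos hβpos hγpos
    have : c * (β * γ) = 0 := by linarith [h]
    rcases mul_eq_zero.mp this with h0 | h0
    · exact h0
    · exact absurd h0 (ne_of_gt (mul_pos hβpos hγpos))
  have ha0 : a = 0 := by
    rw [hc0] at e2
    have : a * α = 0 := by linarith
    rcases mul_eq_zero.mp this with h0 | h0
    · exact h0
    · exact absurd h0 (ne_of_gt hαpos)
  have hb0 : b = 0 := by
    rw [hc0] at e1
    have : b * α = 0 := by linarith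
    rcases mul_eq_zero.mp this with h0 | h0
    · exact h0
    · exact absurd h0 (ne_of_gt hαpos)
  intro i
  fin_cases i
  · exact ha0
  · exact hb0
  · exact hc0
end

section
/- For any two distinct points u, v ∈ H, the Gram matrix of the cycle pairing on the triple (p, q(u), q(v)), namely the 3×3 matrix with entries ⟨p,p⟩, ⟨p,q(u)⟩, ⟨p,q(v)⟩, ⟨q(u),p⟩, ⟨q(u),q(u)⟩, ⟨q(u),q(v)⟩, ⟨q(v),p⟩, ⟨q(v),q(u)⟩, ⟨q(v),q(v)⟩, has strictly negative determinant; in particular the cycle pairing restricted to the span of p, q(u), q(v) is nondegenerate. -/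
variable {K : Type*} [Field K] [LinearOrder K] [IsStrictOrderedRing K]
variable {E : Type*} [AddCommGroup E] [Module K E]

lemma cyc_add_left (B : LinearMap.BilinForm K E) (f g h : K × E × K) :
    cyc B (f + g) h = cyc B f h + cyc B g h := by
  simp [cyc, Prod.fst_add, Prod.snd_add]; ring

lemma cyc_smul_left (B : LinearMap.BilinForm K E) (x : K) (f h : K × E × K) :
    cyc B (x • f) h = x * cyc B f h := by
  simp [cyc, Prod.smul_fst, Prod.smul_snd, smul_eq_mul]; ring

open Matrix in
/-- The Gram matrix of the cycle pairing on `(p, q(u), q(v))` for distinct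
`u, v ∈ H` has strictly negative determinant; in particular the cycle pairing
restricted to the span of `p, q(u), q(v)` is nondegenerate. -/
theorem gram_det_neg
    (B : LinearMap.BilinForm K E)
    (heuc : ∀ x : K, 0 ≤ x → ∃ y : K, y * y = x)
    (hdim : Module.finrank K E = 2)
    (hsymm : ∀ x y : E, B x y = B y x)
    (hpos : ∀ x : E, x ≠ 0 → 0 < B x x)
    (i : E) (hi : B i i = 1)
    (u v : E) (hu : B i u < 0) (hv : B i v < 0) (huv : u ≠ v) :
    (!![cyc B ((0 : K), i, (0 : K)) ((0 : K), i, (0 : K)),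
        cyc B ((0 : K), i, (0 : K)) (qc B u),
        cyc B ((0 : K), i, (0 : K)) (qc B v);
        cyc B (qc B u) ((0 : K), i, (0 : K)),
        cyc B (qc B u) (qc B u),
        cyc B (qc B u) (qc B v);
        cyc B (qc B v) ((0 : K), i, (0 : K)),
        cyc B (qc B v) (qc B u),
        cyc B (qc B v) (qc B v)]).det < 0 ∧
    ∀ f ∈ Submodule.span K {((0 : K), i, (0 : K)), qc B u, qc B v},
      (∀ g ∈ Submodule.span K {((0 : K), i, (0 : K)), qc B u, qc B v},
        cyc B f g = 0) → f = 0 := by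
  have hd : 0 < B (u - v) (u - v) := hpos _ (sub_ne_zero.mpr huv)
  have hBd : B (u - v) (u - v) = B u u - 2 * B u v + B v v := by
    simp [map_sub, LinearMap.sub_apply]
    rw [hsymm v u]; ring
  set M := !![cyc B ((0 : K), i, (0 : K)) ((0 : K), i, (0 : K)),
        cyc B ((0 : K), i, (0 : K)) (qc B u),
        cyc B ((0 : K), i, (0 : K)) (qc B v);
        cyc B (qc B u) ((0 : K), i, (0 : K)),
        cyc B (qc B u) (qc B u),
        cyc B (qc B u) (qc B v);
        cyc B (qc B v) ((0 : K), i, (0 : K)),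
        cyc B (qc B v) (qc B u),
        cyc B (qc B v) (qc B v)] with hM
  have hdet : M.det < 0 := by
    rw [hM, Matrix.det_fin_three]
    simp
    simp only [cyc, qc, _root_.map_smul, LinearMap.smul_apply, smul_eq_mul, hi]
    rw [hsymm u i, hsymm v i, hsymm v u]
    nlinarith [mul_pos (neg_pos.mpr hu) (neg_pos.mpr hv), sq_nonneg (B u u - 2*B u v + B v v), hd, hBd]
  have hcomm : ∀ f g : K × E × K, cyc B f g = cyc B g f := by
    intro f g; simp only [cyc, hsymm f.2.1 g.2.1]; ring
  refine ⟨hdet, ?_⟩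
  intro f hf hfg
  set p : K × E × K := ((0 : K), i, (0 : K)) with hp
  rw [show ({((0 : K), i, (0 : K)), qc B u, qc B v} : Set (K × E × K)) =
      insert p {qc B u, qc B v} from rfl] at hf
  rw [Submodule.mem_span_insert] at hf
  obtain ⟨x, w, hw, rfl⟩ := hf
  rw [Submodule.mem_span_pair] at hw
  obtain ⟨y, z, rfl⟩ := hw
  have key : ∀ g, cyc B (x • p + (y • qc B u + z • qc B v)) g =
      x * cyc B p g + y * cyc B (qc B u) g + z * cyc B (qc B v) g := by
    intro g
    rw [cyc_add_left, cyc_add_left, cyc_smul_left, cyc_smul_left, cyc_smul_left]; ring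
  have hmem : ∀ g ∈ ({p, qc B u, qc B v} : Set (K × E × K)),
      g ∈ Submodule.span K ({p, qc B u, qc B v} : Set (K × E × K)) :=
    fun g hg => Submodule.subset_span hg
  have e1 := hfg p (hmem p (by simp))
  have e2 := hfg (qc B u) (hmem _ (by simp))
  have e3 := hfg (qc B v) (hmem _ (by simp))
  rw [key] at e1 e2 e3
  have hmv : M.mulVec ![x, y, z] = 0 := by
    funext j
    fin_cases j
    · simp [hM, Matrix.mulVec, dotProduct, Fin.sum_univ_three]
      linear_combination e1 + y * hcomm p (qc B u) + z * hcomm p (qc B v)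
    · simp [hM, Matrix.mulVec, dotProduct, Fin.sum_univ_three]
      linear_combination e2 + x * hcomm (qc B u) p + z * hcomm (qc B u) (qc B v)
    · simp [hM, Matrix.mulVec, dotProduct, Fin.sum_univ_three]
      linear_combination e3 + x * hcomm (qc B v) p + y * hcomm (qc B v) (qc B u)
  have hv0 := Matrix.eq_zero_of_mulVec_eq_zero (ne_of_lt hdet) hmv
  have hx : x = 0 := congrFun hv0 0
  have hy : y = 0 := congrFun hv0 1
  have hz : z = 0 := congrFun hv0 2
  simp [hx, hy, hz]
end

section
/- (Incidence Axiom 1) For any two distinct points u, v ∈ H there exists a nonisotropic cycle m ∈ F with ⟨m, p⟩ = 0, ⟨m, q(u)⟩ = 0 and ⟨m, q(v)⟩ = 0; moreover, every cycle m' ∈ F satisfying ⟨m', p⟩ = 0, ⟨m', q(u)⟩ = 0 and ⟨m', q(v)⟩ = 0 is a scalar multiple of m. -/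
set_option maxHeartbeats 1000000


variable {K : Type*} [Field K] [LinearOrder K] [IsStrictOrderedRing K]
variable {E : Type*} [AddCommGroup E] [Module K E]

/-- In a 2-dimensional definite space over a euclidean field, a unit vector
extends to an orthonormal basis, with explicit coordinates. -/
theorem exists_onb_aux
    (B : LinearMap.BilinForm K E)
    (heuc : ∀ x : K, 0 ≤ x → ∃ y : K, y * y = x)
    (hdim : Module.finrank K E = 2)
    (hsymm : ∀ x y : E, B x y = B y x)
    (hpos : ∀ x : E, x ≠ 0 → 0 < B x x)
    (i : E) (hi : B i i = 1) :
    ∃ j : E, B i j = 0 ∧ B j j = 1 ∧ ∀ x : E, x = B i x • i + B j x • j := by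
  have hfd : FiniteDimensional K E := FiniteDimensional.of_finrank_pos (by omega)
  -- find a vector not in the span of i
  have hex : ∃ w : E, ∀ k : K, w ≠ k • i := by
    by_contra h
    push_neg at h
    have h1 : Module.finrank K E ≤ 1 := by
      refine finrank_le_one i ?_
      intro w
      obtain ⟨k, hk⟩ := h w
      exact ⟨k, hk.symm⟩
    omega
  obtain ⟨w, hw⟩ := hex
  set j0 : E := w - B i w • i with hj0
  have hj0ne : j0 ≠ 0 := by
    intro h
    exact hw (B i w) (by rw [← sub_eq_zero]; exact h)
  have hij0 : B i j0 = 0 := by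
    simp [hj0, map_sub, map_smul, hi]
  have hj0pos : 0 < B j0 j0 := hpos j0 hj0ne
  obtain ⟨r, hr⟩ := heuc (B j0 j0) hj0pos.le
  have hrne : r ≠ 0 := by
    intro h
    apply hj0pos.ne'
    rw [← hr, h, mul_zero]
  refine ⟨r⁻¹ • j0, ?_, ?_, ?_⟩
  · simp [map_smul, hij0]
  · have : B (r⁻¹ • j0) (r⁻¹ • j0) = r⁻¹ * r⁻¹ * B j0 j0 := by
      simp [map_smul]; ring
    rw [this, ← hr]
    field_simp
  · intro x
    set j : E := r⁻¹ • j0 with hj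
    have hij : B i j = 0 := by simp [hj, map_smul, hij0]
    have hjj : B j j = 1 := by
      have : B j j = r⁻¹ * r⁻¹ * B j0 j0 := by simp [hj, map_smul]; ring
      rw [this, ← hr]; field_simp
    set z : E := x - B i x • i - B j x • j with hz
    have hiz : B i z = 0 := by
      simp [hz, map_sub, map_smul, hi, hij]
    have hjz : B j z = 0 := by
      have hji : B j i = 0 := by rw [hsymm]; exact hij
      simp [hz, map_sub, map_smul, hji, hjj]
    have hz0 : z = 0 := by
      by_contra hzne
      have hli : LinearIndependent K ![i, j, z] := by
        rw [Fintype.linearIndependent_iff]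
        intro g hg
        have hgsum : g 0 • i + g 1 • j + g 2 • z = 0 := by
          have := hg
          simpa [Fin.sum_univ_three] using this
        have e1 : g 0 = 0 := by
          have := congrArg (fun t => B i t) hgsum
          simpa [map_add, map_smul, hi, hij, hiz] using this
        have e2 : g 1 = 0 := by
          have hji : B j i = 0 := by rw [hsymm]; exact hij
          have := congrArg (fun t => B j t) hgsum
          simpa [map_add, map_smul, hji, hjj, hjz] using this
        have e3 : g 2 = 0 := by
          have hzi : B z i = 0 := by rw [hsymm]; exact hiz
          have hzj : B z j = 0 := by rw [hsymm]; exact hjz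
          have := congrArg (fun t => B z t) hgsum
          simp [map_add, map_smul, hzi, hzj] at this
          rcases this with h | h
          · exact h
          · exact absurd h (hpos z hzne).ne'
        intro k
        fin_cases k <;> assumption
      have := hli.fintype_card_le_finrank
      simp [hdim] at this
    have : x - B i x • i - B j x • j = 0 := hz0
    have := sub_eq_zero.mp (by rw [sub_sub] at this; exact this)
    exact this

/-- Incidence Axiom 1: through any two distinct points of `H` there is a unique line. -/
theorem incidence_axiom_one
    (B : LinearMap.BilinForm K E)
    (heuc : ∀ x : K, 0 ≤ x → ∃ y : K, y * y = x)
    (hdim : Module.finrank K E = 2)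
    (hsymm : ∀ x y : E, B x y = B y x)
    (hpos : ∀ x : E, x ≠ 0 → 0 < B x x)
    (i : E) (hi : B i i = 1)
    (u v : E) (hu : B i u < 0) (hv : B i v < 0) (huv : u ≠ v) :
    ∃ m : K × E × K, cyc B m m ≠ 0 ∧
      cyc B m ((0 : K), i, (0 : K)) = 0 ∧
      cyc B m (qc B u) = 0 ∧ cyc B m (qc B v) = 0 ∧
      ∀ m' : K × E × K, cyc B m' ((0 : K), i, (0 : K)) = 0 →
        cyc B m' (qc B u) = 0 → cyc B m' (qc B v) = 0 →
        ∃ c : K, m' = c • m := by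
  obtain ⟨j, hij, hjj, hdec⟩ := exists_onb_aux B heuc hdim hsymm hpos i hi
  have hji : B j i = 0 := by rw [hsymm]; exact hij
  -- inner product formula in coordinates
  have hxy : ∀ x y : E, B x y = B i x * B i y + B j x * B j y := by
    intro x y
    conv_lhs => rw [hdec y]
    simp [map_add, map_smul, hsymm x i, hsymm x j]
    ring
  set u1 := B i u with hu1
  set u2 := B j u with hu2
  set v1 := B i v with hv1
  set v2 := B j v with hv2
  have hBu : B u u = u1 * u1 + u2 * u2 := hxy u u
  have hBv : B v v = v1 * v1 + v2 * v2 := hxy v v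
  -- the coordinates of u and v differ somewhere
  have hcoord : u1 ≠ v1 ∨ u2 ≠ v2 := by
    by_contra h
    push_neg at h
    apply huv
    rw [hdec u, hdec v, ← hu1, ← hu2, ← hv1, ← hv2, h.1, h.2]
  clear_value u1 u2 v1 v2
  -- construct the line
  set a : K := u2 - v2 with ha
  set bb : K := v1 * v1 + v2 * v2 - u1 * u1 - u2 * u2 with hbb
  set c : K := -bb * u2 - a * (u1 * u1 + u2 * u2) with hc
  set m : K × E × K := (a, bb • j, c) with hm
  clear_value a bb c m
  have hBmi : B (bb • j) i = 0 := by simp [map_smul, hji]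
  have hBmu : B (bb • j) u = bb * u2 := by simp [map_smul, hu2]
  have hBmv : B (bb • j) v = bb * v2 := by simp [map_smul, hv2]
  -- key positivity
  have hkey : bb * bb - 4 * a * c
      = (v1 * v1 - u1 * u1 + (u2 - v2) * (u2 - v2)) * (v1 * v1 - u1 * u1 + (u2 - v2) * (u2 - v2))
        + 4 * ((u2 - v2) * (u2 - v2)) * (u1 * u1) := by
    simp only [hc, hbb, ha]; ring
  have hquad : 0 < bb * bb - 4 * a * c := by
    rw [hkey]
    rcases eq_or_ne u2 v2 with h2 | h2
    · have h1 : u1 ≠ v1 := by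
        rcases hcoord with h | h
        · exact h
        · exact absurd h2 h
      have hs : v1 * v1 - u1 * u1 ≠ 0 := by
        intro h
        have : (v1 - u1) * (v1 + u1) = 0 := by linarith [h]
        rcases mul_eq_zero.mp this with h' | h'
        · exact h1 (by linarith)
        · linarith
      have h0 : u2 - v2 = 0 := by rw [h2, sub_self]
      rw [h0]
      have hp := mul_self_pos.mpr hs
      nlinarith [hp]
    · have h2' : u2 - v2 ≠ 0 := sub_ne_zero.mpr h2
      have hd : 0 < (u2 - v2) * (u2 - v2) := mul_self_pos.mpr h2'
      have hu1 : 0 < u1 * u1 := mul_self_pos.mpr hu.ne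
      have h3 : 0 < 4 * ((u2 - v2) * (u2 - v2)) * (u1 * u1) :=
        mul_pos (mul_pos (by norm_num) hd) hu1
      have h4 := mul_self_nonneg (v1 * v1 - u1 * u1 + (u2 - v2) * (u2 - v2))
      linarith
  have hsmul : ∀ (k : K) (x y : E), B (k • x) y = k * B x y := by
    intro k x y
    rw [map_smul]
    simp
  have hsmul2 : ∀ (k : K) (x y : E), B x (k • y) = k * B x y := by
    intro k x y
    rw [hsymm, hsmul, hsymm]
  refine ⟨m, ?_, ?_, ?_, ?_, ?_⟩
  · -- nonisotropic
    rw [hm]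
    have h5 : cyc B (a, bb • j, c) (a, bb • j, c) = bb * bb - 4 * a * c := by
      show B (bb • j) (bb • j) - 2 * a * c - 2 * a * c = bb * bb - 4 * a * c
      rw [hsmul, hsmul2, hjj]
      ring
    rw [h5]
    exact hquad.ne'
  · rw [hm]
    show B (bb • j) i - 2 * a * 0 - 2 * 0 * c = 0
    rw [hsmul, hji]
    ring
  · rw [hm]
    show B (bb • j) ((-2 : K) • u) - 2 * a * (B u u) - 2 * 1 * c = 0
    rw [hsmul2, hsmul, ← hu2, hBu, hc]
    ring
  · rw [hm]
    show B (bb • j) ((-2 : K) • v) - 2 * a * (B v v) - 2 * 1 * c = 0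
    rw [hsmul2, hsmul, ← hv2, hBv, hc, hbb, ha]
    ring
  · -- uniqueness
    intro m' hp' hqu' hqv'
    obtain ⟨a', b', c'⟩ := m'
    set b2 := B j b' with hb2
    clear_value b2
    have hb1z : B i b' = 0 := by
      have h6 : B b' i - 2 * a' * 0 - 2 * 0 * c' = 0 := hp'
      rw [hsymm]
      linarith [h6]
    have hb' : b' = b2 • j := by
      conv_lhs => rw [hdec b', hb1z, ← hb2]
      simp
    have hBb'u : B b' u = b2 * u2 := by
      rw [hb', hsmul, ← hu2]
    have hBb'v : B b' v = b2 * v2 := by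
      rw [hb', hsmul, ← hv2]
    have equ : b2 * u2 + a' * (u1 * u1 + u2 * u2) + c' = 0 := by
      have h6 : B b' ((-2 : K) • u) - 2 * a' * (B u u) - 2 * 1 * c' = 0 := hqu'
      rw [hsmul2, hBb'u, hBu] at h6
      linarith
    have eqv : b2 * v2 + a' * (v1 * v1 + v2 * v2) + c' = 0 := by
      have h6 : B b' ((-2 : K) • v) - 2 * a' * (B v v) - 2 * 1 * c' = 0 := hqv'
      rw [hsmul2, hBb'v, hBv] at h6
      linarith
    have hcross : b2 * a = a' * bb := by
      rw [ha, hbb]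
      nlinarith [equ, eqv]
    rcases eq_or_ne a 0 with haz | haz
    · have hbbz : bb ≠ 0 := by
        intro h
        rw [haz, h] at hquad
        simp at hquad
      refine ⟨b2 / bb, ?_⟩
      have ha'z : a' = 0 := by
        have h7 := hcross
        rw [haz, mul_zero] at h7
        rcases mul_eq_zero.mp h7.symm with h | h
        · exact h
        · exact absurd h hbbz
      have hb2e : b2 = (b2 / bb) * bb := by field_simp
      have hc'c : c' = (b2 / bb) * c := by
        have h8 : c' = -b2 * u2 := by rw [ha'z] at equ; linarith
        rw [h8, hc, haz]
        field_simp
        ring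
      have hsm : (b2 / bb) • m = ((b2 / bb) * a, ((b2 / bb) * bb) • j, (b2 / bb) * c) := by
        rw [hm]
        rw [Prod.smul_mk, Prod.smul_mk, smul_smul]
        rfl
      rw [hsm]
      refine Prod.ext ?_ (Prod.ext ?_ ?_)
      · show a' = (b2 / bb) * a
        rw [ha'z, haz, mul_zero]
      · show b' = ((b2 / bb) * bb) • j
        rw [hb', ← hb2e]
      · exact hc'c
    · refine ⟨a' / a, ?_⟩
      have hb2e : b2 = (a' / a) * bb := by
        field_simp
        linarith [hcross]
      have hc'c : c' = (a' / a) * c := by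
        have h8 : c' = -b2 * u2 - a' * (u1 * u1 + u2 * u2) := by linarith [equ]
        rw [h8, hc, hb2e]
        field_simp
      have hsm : (a' / a) • m = ((a' / a) * a, ((a' / a) * bb) • j, (a' / a) * c) := by
        rw [hm]
        rw [Prod.smul_mk, Prod.smul_mk, smul_smul]
        rfl
      rw [hsm]
      refine Prod.ext ?_ (Prod.ext ?_ ?_)
      · show a' = (a' / a) * a
        field_simp
      · show b' = ((a' / a) * bb) • j
        rw [hb', hb2e]
      · exact hc'c
end

section
/- For any u ∈ E, the cycle q(u) − 2⟨p, q(u)⟩·p equals q(u'), where u' = u − 2·B(i,u)·i; moreover ⟨p, q(u')⟩ = −⟨p, q(u)⟩, and for every cycle m with ⟨m, p⟩ = 0 one has ⟨m, q(u')⟩ = ⟨m, q(u)⟩. -/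
variable {K : Type*} [Field K] [LinearOrder K] [IsStrictOrderedRing K]
variable {E : Type*} [AddCommGroup E] [Module K E]

/-- Reflection of a zero circle along `p`: `q(u) − 2⟨p, q(u)⟩·p = q(u')` with
`u' = u − 2·B(i,u)·i`; moreover `⟨p, q(u')⟩ = −⟨p, q(u)⟩` and `⟨m, q(u')⟩ = ⟨m, q(u)⟩`
for every cycle `m` orthogonal to `p`. -/
theorem reflect_along_p
    (B : LinearMap.BilinForm K E)
    (heuc : ∀ x : K, 0 ≤ x → ∃ y : K, y * y = x)
    (hdim : Module.finrank K E = 2)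
    (hsymm : ∀ x y : E, B x y = B y x)
    (hpos : ∀ x : E, x ≠ 0 → 0 < B x x)
    (i : E) (hi : B i i = 1)
    (u : E) :
    qc B u - (2 * cyc B ((0 : K), i, (0 : K)) (qc B u)) • ((0 : K), i, (0 : K))
        = qc B (u - (2 * B i u) • i) ∧
    cyc B ((0 : K), i, (0 : K)) (qc B (u - (2 * B i u) • i))
        = -cyc B ((0 : K), i, (0 : K)) (qc B u) ∧
    ∀ m : K × E × K, cyc B m ((0 : K), i, (0 : K)) = 0 →
      cyc B m (qc B (u - (2 * B i u) • i)) = cyc B m (qc B u) := by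
  have hBu : B (u - (2 * B i u) • i) (u - (2 * B i u) • i) = B u u := by
    simp [map_sub, map_smul, LinearMap.sub_apply, LinearMap.smul_apply, smul_eq_mul, hi,
      hsymm u i]
    ring
  refine ⟨?_, ?_, ?_⟩
  · apply Prod.ext
    · simp [qc, cyc]
    · apply Prod.ext
      · simp [qc, cyc, smul_smul, sub_smul, smul_sub]
      · simp only [qc, cyc]
        rw [hBu]
        simp
  · simp [qc, cyc, map_sub, map_smul, smul_eq_mul, hi]
    ring
  · intro m hm
    simp [qc, cyc] at hm ⊢
    have : B m.2.1 i = 2 * m.1 * 0 + 2 * 0 * m.2.2 := by linarith [hm]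
    simp at this
    simp [map_sub, map_smul, smul_eq_mul, this, hBu]
    left
    rw [hsymm u i, hi]
    ring
end

section
/- Let u, v, w be three pairwise distinct points of H that are collinear, i.e., there exists a nonisotropic cycle m with ⟨m, p⟩ = 0 and ⟨m, q(u)⟩ = ⟨m, q(v)⟩ = ⟨m, q(w)⟩ = 0. Then there exist a, b, c ∈ K, all nonzero, with p = a·q(u) + b·q(v) + c·q(w), and the three numbers a, b, c do not all have the same sign (exactly two of them have the same sign). -/
variable {K : Type*} [Field K] [LinearOrder K] [IsStrictOrderedRing K]
variable {E : Type*} [AddCommGroup E] [Module K E]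

/-- The cycle pairing with a fixed first argument, as a linear map. -/
def cycMap (B : LinearMap.BilinForm K E) (m : K × E × K) : (K × E × K) →ₗ[K] K where
  toFun g := cyc B m g
  map_add' x y := by
    simp only [cyc, Prod.fst_add, Prod.snd_add, map_add]
    ring
  map_smul' t x := by
    simp only [cyc, Prod.smul_fst, Prod.smul_snd, map_smul, smul_eq_mul,
      RingHom.id_apply]
    ring

lemma cyc_add_right (B : LinearMap.BilinForm K E) (f g h : K × E × K) :
    cyc B f (g + h) = cyc B f g + cyc B f h := by
  simp only [cyc, Prod.fst_add, Prod.snd_add, map_add]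
  ring

lemma cyc_smul_right (B : LinearMap.BilinForm K E) (t : K) (f g : K × E × K) :
    cyc B f (t • g) = t * cyc B f g := by
  simp only [cyc, Prod.smul_fst, Prod.smul_snd, map_smul, smul_eq_mul]
  ring

lemma cyc_comb (B : LinearMap.BilinForm K E) (f g h k : K × E × K) (a b c : K) :
    cyc B f (a • g + b • h + c • k)
      = a * cyc B f g + b * cyc B f h + c * cyc B f k := by
  rw [cyc_add_right, cyc_add_right, cyc_smul_right, cyc_smul_right, cyc_smul_right]

lemma bil_neg (B : LinearMap.BilinForm K E) (x : E) : B (-x) (-x) = B x x := by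
  simp only [map_neg, LinearMap.neg_apply, neg_neg]

lemma cyc_qc_qc (B : LinearMap.BilinForm K E) (hsymm : ∀ x y : E, B x y = B y x)
    (x y : E) : cyc B (qc B x) (qc B y) = -2 * B (x - y) (x - y) := by
  simp only [cyc, qc, map_smul, map_sub, LinearMap.smul_apply, LinearMap.sub_apply,
    smul_eq_mul]
  rw [hsymm y x]
  ring

lemma cyc_qc_p (B : LinearMap.BilinForm K E) (x : E) (i : E) :
    cyc B (qc B x) ((0 : K), i, (0 : K)) = -2 * B x i := by
  simp only [cyc, qc, map_smul, LinearMap.smul_apply, smul_eq_mul]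
  ring

lemma cyc_p_qc (B : LinearMap.BilinForm K E) (x : E) (i : E) :
    cyc B ((0 : K), i, (0 : K)) (qc B x) = -2 * B i x := by
  simp only [cyc, qc, map_smul, smul_eq_mul]
  ring

set_option maxHeartbeats 1000000 in
/-- Three pairwise distinct collinear points of `H` give a linear relation
`p = a·q(u) + b·q(v) + c·q(w)` with all coefficients nonzero, not all of the same sign. -/
theorem collinear_relation
    (B : LinearMap.BilinForm K E)
    (heuc : ∀ x : K, 0 ≤ x → ∃ y : K, y * y = x)
    (hdim : Module.finrank K E = 2)
    (hsymm : ∀ x y : E, B x y = B y x)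
    (hpos : ∀ x : E, x ≠ 0 → 0 < B x x)
    (i : E) (hi : B i i = 1)
    (u v w : E) (hu : B i u < 0) (hv : B i v < 0) (hw : B i w < 0)
    (huv : u ≠ v) (huw : u ≠ w) (hvw : v ≠ w)
    (m : K × E × K) (hm : cyc B m m ≠ 0)
    (hmp : cyc B m ((0 : K), i, (0 : K)) = 0)
    (hmu : cyc B m (qc B u) = 0) (hmv : cyc B m (qc B v) = 0)
    (hmw : cyc B m (qc B w) = 0) :
    ∃ a b c : K, a ≠ 0 ∧ b ≠ 0 ∧ c ≠ 0 ∧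
      ((0 : K), i, (0 : K)) = a • qc B u + b • qc B v + c • qc B w ∧
      ¬ ((0 < a ∧ 0 < b ∧ 0 < c) ∨ (a < 0 ∧ b < 0 ∧ c < 0)) := by
  have hE : FiniteDimensional K E := FiniteDimensional.of_finrank_pos (by omega)
  -- positivity of squared distances
  have hduv : 0 < B (u - v) (u - v) := hpos _ (sub_ne_zero.mpr huv)
  have hduw : 0 < B (u - w) (u - w) := hpos _ (sub_ne_zero.mpr huw)
  have hdvw : 0 < B (v - w) (v - w) := hpos _ (sub_ne_zero.mpr hvw)
  set duv := B (u - v) (u - v) with hduv_def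
  set duw := B (u - w) (u - w) with hduw_def
  set dvw := B (v - w) (v - w) with hdvw_def
  have hvu : B (v - u) (v - u) = duv := by
    rw [hduv_def, show u - v = -(v - u) by abel, bil_neg]
  have hwu : B (w - u) (w - u) = duw := by
    rw [hduw_def, show u - w = -(w - u) by abel, bil_neg]
  have hwv : B (w - v) (w - v) = dvw := by
    rw [hdvw_def, show v - w = -(w - v) by abel, bil_neg]
  have huu : B (u - u) (u - u) = 0 := by simp
  have hvv : B (v - v) (v - v) = 0 := by simp
  have hww : B (w - w) (w - w) = 0 := by simp
  set Pu : K := -2 * B i u with hPu_def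
  set Pv : K := -2 * B i v with hPv_def
  set Pw : K := -2 * B i w with hPw_def
  have hPu : 0 < Pu := by rw [hPu_def]; linarith only [hu]
  have hPv : 0 < Pv := by rw [hPv_def]; linarith only [hv]
  have hPw : 0 < Pw := by rw [hPw_def]; linarith only [hw]
  set φ := cycMap B m with hφ
  have hφ_apply : ∀ g, φ g = cyc B m g := fun g => rfl
  -- the ambient space has dimension 4
  have hF4 : Module.finrank K (K × E × K) = 4 := by
    rw [Module.finrank_prod, Module.finrank_prod, hdim, Module.finrank_self]
  -- φ is surjective
  have hsurj : Function.Surjective φ := by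
    intro y
    refine ⟨(y / cyc B m m) • m, ?_⟩
    rw [map_smul, smul_eq_mul, hφ_apply, div_mul_cancel₀ _ hm]
  have hrange : LinearMap.range φ = ⊤ := LinearMap.range_eq_top.mpr hsurj
  have hker : Module.finrank K (LinearMap.ker φ) = 3 := by
    have h1 := LinearMap.finrank_range_add_finrank_ker φ
    rw [hF4, hrange, finrank_top, Module.finrank_self] at h1
    omega
  -- the three cycles
  set z : Fin 3 → K × E × K := ![qc B u, qc B v, qc B w] with hz
  have hzW : ∀ j : Fin 3, z j ∈ LinearMap.ker φ := by
    intro j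
    fin_cases j <;> simp only [hz, Matrix.cons_val_zero, Matrix.cons_val_one,
      Matrix.head_cons, Matrix.cons_val_two, Matrix.tail_cons, LinearMap.mem_ker] <;>
      rw [hφ_apply] <;> assumption
  -- linear independence
  have hli : LinearIndependent K z := by
    rw [Fintype.linearIndependent_iff]
    intro g hg
    rw [Fin.sum_univ_three] at hg
    simp only [hz, Matrix.cons_val_zero, Matrix.cons_val_one, Matrix.head_cons,
      Matrix.cons_val_two, Matrix.tail_cons] at hg
    set a := g 0 with hadef; set b := g 1 with hbdef; set c := g 2 with hcdef
    have equ := cyc_comb B (qc B u) (qc B u) (qc B v) (qc B w) a b c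
    have eqv := cyc_comb B (qc B v) (qc B u) (qc B v) (qc B w) a b c
    have eqw := cyc_comb B (qc B w) (qc B u) (qc B v) (qc B w) a b c
    rw [hg] at equ eqv eqw
    simp only [cyc_qc_qc B hsymm] at equ eqv eqw
    have h0 : ∀ f : K × E × K, cyc B f (0 : K × E × K) = 0 := by
      intro f; simp [cyc]
    rw [h0, huu, ← hduv_def, ← hduw_def] at equ
    rw [h0, hvu, hvv, ← hdvw_def] at eqv
    rw [h0, hwu, hwv, hww] at eqw
    have hc : c * (2 * (duw * dvw)) = 0 := by
      linear_combination (dvw / 2) * equ + (duw / 2) * eqv - (duv / 2) * eqw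
    have hc0 : c = 0 := by
      rcases mul_eq_zero.mp hc with h | h
      · exact h
      · have := mul_pos hduw hdvw; linarith
    have hb0 : b = 0 := by
      rw [hc0] at equ
      have h2 : b * (2 * duv) = 0 := by linear_combination equ
      rcases mul_eq_zero.mp h2 with h | h
      · exact h
      · linarith
    have ha0 : a = 0 := by
      rw [hc0] at eqv
      have h2 : a * (2 * duv) = 0 := by linear_combination eqv
      rcases mul_eq_zero.mp h2 with h | h
      · exact h
      · linarith
    intro j
    fin_cases j
    · exact ha0
    · exact hb0
    · exact hc0
  -- build a basis of the kernel
  set W := LinearMap.ker φ with hW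
  let Z : Fin 3 → W := fun j => ⟨z j, hzW j⟩
  have hZli : LinearIndependent K Z := by
    have hcomp : z = (W.subtype) ∘ Z := rfl
    rw [hcomp] at hli
    exact LinearIndependent.of_comp W.subtype hli
  have hcard : Fintype.card (Fin 3) = Module.finrank K W := by
    rw [hker]; simp
  let bW : Module.Basis (Fin 3) K W := basisOfLinearIndependentOfCardEqFinrank hZli hcard
  have hbW : ∀ j, bW j = Z j := fun j => by
    simp [bW, coe_basisOfLinearIndependentOfCardEqFinrank]
  have hpW : ((0 : K), i, (0 : K)) ∈ W := by
    rw [hW, LinearMap.mem_ker, hφ_apply]; exact hmp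
  set pW : W := ⟨((0 : K), i, (0 : K)), hpW⟩ with hpWdef
  have hrepr := Module.Basis.sum_repr bW pW
  rw [Fin.sum_univ_three, hbW 0, hbW 1, hbW 2] at hrepr
  set a := bW.repr pW 0 with hadef
  set b := bW.repr pW 1 with hbdef
  set c := bW.repr pW 2 with hcdef
  have hrep : ((0 : K), i, (0 : K)) = a • qc B u + b • qc B v + c • qc B w := by
    have h2 := congrArg (W.subtype) hrepr
    simp only [map_add, map_smul] at h2
    have hZ0 : (W.subtype (Z 0) : K × E × K) = qc B u := rfl
    have hZ1 : (W.subtype (Z 1) : K × E × K) = qc B v := rfl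
    have hZ2 : (W.subtype (Z 2) : K × E × K) = qc B w := rfl
    rw [hZ0, hZ1, hZ2] at h2
    exact h2.symm
  -- pairing computations
  have equ := cyc_comb B (qc B u) (qc B u) (qc B v) (qc B w) a b c
  have eqv := cyc_comb B (qc B v) (qc B u) (qc B v) (qc B w) a b c
  have eqw := cyc_comb B (qc B w) (qc B u) (qc B v) (qc B w) a b c
  have eqp := cyc_comb B ((0 : K), i, (0 : K)) (qc B u) (qc B v) (qc B w) a b c
  rw [← hrep] at equ eqv eqw eqp
  rw [cyc_qc_p, cyc_qc_qc B hsymm, cyc_qc_qc B hsymm, cyc_qc_qc B hsymm] at equ eqv eqw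
  rw [cyc_p_qc, cyc_p_qc, cyc_p_qc] at eqp
  have hpp : cyc B ((0 : K), i, (0 : K)) ((0 : K), i, (0 : K)) = 1 := by
    simp [cyc, hi]
  rw [hpp, ← hPu_def, ← hPv_def, ← hPw_def] at eqp
  rw [huu, ← hduv_def, ← hduw_def, hsymm u i, ← hPu_def] at equ
  rw [hvu, hvv, ← hdvw_def, hsymm v i, ← hPv_def] at eqv
  rw [hwu, hwv, hww, hsymm w i, ← hPw_def] at eqw
  clear_value a b c Pu Pv Pw duv duw dvw bW Z pW z φ W
  clear hadef hbdef hcdef hrepr hpWdef hbW hcard hZli hzW hli hφ_apply hsurj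
  clear hrange hker hF4 hz hφ hpp hduv_def hduw_def hdvw_def hPu_def hPv_def
  clear hPw_def huu hvv hww hvu hwu hwv hmp hmu hmv hmw hm hE heuc hdim
  clear pW hpW bW Z hW z W φ m
  -- equ : Pu = a * (-2*0) + b * (-2*duv) + c * (-2*duw)  etc.
  refine ⟨a, b, c, ?_, ?_, ?_, hrep, ?_⟩
  · -- a ≠ 0
    intro ha
    rw [ha] at eqv eqw eqp
    have hcneg : c < 0 := by nlinarith
    have hbneg : b < 0 := by nlinarith
    nlinarith [mul_neg_of_neg_of_pos hbneg hPv, mul_neg_of_neg_of_pos hcneg hPw]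
  · -- b ≠ 0
    intro hb
    rw [hb] at equ eqw eqp
    have hcneg : c < 0 := by nlinarith
    have haneg : a < 0 := by nlinarith
    nlinarith [mul_neg_of_neg_of_pos haneg hPu, mul_neg_of_neg_of_pos hcneg hPw]
  · -- c ≠ 0
    intro hc
    rw [hc] at equ eqv eqp
    have hbneg : b < 0 := by nlinarith
    have haneg : a < 0 := by nlinarith
    nlinarith [mul_neg_of_neg_of_pos haneg hPu, mul_neg_of_neg_of_pos hbneg hPv]
  · -- not all same sign
    rintro (⟨ha, hb, hc⟩ | ⟨ha, hb, hc⟩)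
    · nlinarith [mul_pos hb hduv, mul_pos hc hduw]
    · nlinarith [mul_neg_of_neg_of_pos ha hPu, mul_neg_of_neg_of_pos hb hPv,
        mul_neg_of_neg_of_pos hc hPw]
end

section
/- Let A, B, C be pairwise distinct positive elements of K, and set u = −2A·i, v = −2B·i, w = −2C·i (these are points of H). If x, y, z ∈ K satisfy p = x·q(u) + y·q(v) + z·q(w), then x·z > 0 if and only if either A < B < C or C < B < A. -/
variable {K : Type*} [Field K] [LinearOrder K] [IsStrictOrderedRing K]
variable {E : Type*} [AddCommGroup E] [Module K E]

/-- On the special line `{−2t·i : t > 0}`, the sign condition `x·z > 0` in a relation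
`p = x·q(u) + y·q(v) + z·q(w)` characterizes natural betweenness. -/
theorem special_line_betweenness
    (B : LinearMap.BilinForm K E)
    (heuc : ∀ x : K, 0 ≤ x → ∃ y : K, y * y = x)
    (hdim : Module.finrank K E = 2)
    (hsymm : ∀ x y : E, B x y = B y x)
    (hpos : ∀ x : E, x ≠ 0 → 0 < B x x)
    (i : E) (hi : B i i = 1)
    (a b c : K) (ha : 0 < a) (hb : 0 < b) (hc : 0 < c)
    (hab : a ≠ b) (hac : a ≠ c) (hbc : b ≠ c)
    (x y z : K)
    (hrel : ((0 : K), i, (0 : K))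
        = x • qc B ((-2 * a) • i) + y • qc B ((-2 * b) • i) + z • qc B ((-2 * c) • i)) :
    0 < x * z ↔ (a < b ∧ b < c) ∨ (c < b ∧ b < a) := by
  have hi0 : i ≠ 0 := by
    intro h; rw [h] at hi; simp at hi
  have h1 : (0:K) = x * 1 + y * 1 + z * 1 := by
    have := congrArg Prod.fst hrel
    simpa [qc] using this
  have e2 := congrArg (fun p : K × E × K => p.2.1) hrel
  simp only [qc, Prod.snd_add, Prod.fst_add, Prod.smul_snd, Prod.smul_fst,
    smul_smul] at e2
  have key2 : (x * (-2 * (-2 * a)) + y * (-2 * (-2 * b)) + z * (-2 * (-2 * c)) - 1) • i = 0 := by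
    rw [sub_smul, one_smul, add_smul, add_smul, ← e2, sub_self]
  have h2 : x * (4*a) + y * (4*b) + z * (4*c) = 1 := by
    rcases smul_eq_zero.mp key2 with h' | h'
    · have := sub_eq_zero.mp h'; linarith [this]
    · exact absurd h' hi0
  have h3 : (0:K) = x * ((-2*a) * ((-2*a) * 1)) + y * ((-2*b) * ((-2*b) * 1))
      + z * ((-2*c) * ((-2*c) * 1)) := by
    have := congrArg (fun p : K × E × K => p.2.2) hrel
    simpa [qc, map_smul, smul_eq_mul, hi] using this
  have hx : x * (4*(b-a)*(c-a)) = -(b+c) := by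
    linear_combination (-(4*b*c))*h1 - (b+c)*h2 - h3
  have hz : z * (4*(b-c)*(a-c)) = -(a+b) := by
    linear_combination (-(4*b*a))*h1 - (a+b)*h2 - h3
  have key : x*z*(16*(b-a)*(c-a)*(b-c)*(a-c)) = (a+b)*(b+c) := by
    linear_combination (z*(4*(b-c)*(a-c)))*hx - (b+c)*hz
  have hN : 0 < (a+b)*(b+c) := mul_pos (by linarith) (by linarith)
  have hac2 : 0 < (a-c)*(a-c) := mul_self_pos.mpr (sub_ne_zero.mpr hac)
  constructor
  · intro hxz
    rcases lt_trichotomy a b with h|h|h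
    · left
      refine ⟨h, ?_⟩
      by_contra hcb
      push_neg at hcb
      have hc' : c < b := hcb.lt_of_ne (fun hh => hbc hh.symm)
      have P : 0 < 16*((b-a)*(b-c)*((a-c)*(a-c))) := by
        have := mul_pos (mul_pos (sub_pos.mpr h) (sub_pos.mpr hc')) hac2
        linarith
      have key' : -(x*z*(16*((b-a)*(b-c)*((a-c)*(a-c))))) = (a+b)*(b+c) := by
        linear_combination key
      linarith [mul_pos hxz P]
    · exact absurd h hab
    · right
      refine ⟨?_, h⟩
      by_contra hbcle
      push_neg at hbcle
      have hb' : b < c := hbcle.lt_of_ne hbc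
      have P : 0 < 16*((a-b)*(c-b)*((a-c)*(a-c))) := by
        have := mul_pos (mul_pos (sub_pos.mpr h) (sub_pos.mpr hb')) hac2
        linarith
      have key' : -(x*z*(16*((a-b)*(c-b)*((a-c)*(a-c))))) = (a+b)*(b+c) := by
        linear_combination key
      linarith [mul_pos hxz P]
  · rintro (⟨h1', h2'⟩|⟨h1', h2'⟩)
    · have Q : 0 < 16*((b-a)*(c-b)*((a-c)*(a-c))) := by
        have := mul_pos (mul_pos (sub_pos.mpr h1') (sub_pos.mpr h2')) hac2
        linarith
      have key' : x*z*(16*((b-a)*(c-b)*((a-c)*(a-c)))) = (a+b)*(b+c) := by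
        linear_combination key
      by_contra hle
      push_neg at hle
      have := mul_le_mul_of_nonneg_right hle Q.le
      rw [zero_mul] at this
      linarith
    · have Q : 0 < 16*((a-b)*(b-c)*((a-c)*(a-c))) := by
        have := mul_pos (mul_pos (sub_pos.mpr h2') (sub_pos.mpr h1')) hac2
        linarith
      have key' : x*z*(16*((a-b)*(b-c)*((a-c)*(a-c)))) = (a+b)*(b+c) := by
        linear_combination key
      by_contra hle
      push_neg at hle
      have := mul_le_mul_of_nonneg_right hle Q.le
      rw [zero_mul] at this
      linarith
end

section
/- (Proposition 2) Let t = (a, b, c) ∈ F be a cycle with ⟨t, p⟩ = 0 (i.e., B(b, i) = 0) and ⟨t, t⟩ = B(b,b) − 4ac = 1. Then for every u ∈ H: B(2a·u + b, 2a·u + b) > 0, and there exist λ ∈ K with λ > 0 and v ∈ H such that q(u) − 2⟨q(u), t⟩·t = λ·q(v). -/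
variable {K : Type*} [Field K] [LinearOrder K] [IsStrictOrderedRing K]
variable {E : Type*} [AddCommGroup E] [Module K E]

/-- Proposition 2: the reflection along a unit-norm cycle orthogonal to `p` is a proper
transformation. -/
theorem prop2_reflection_proper
    (B : LinearMap.BilinForm K E)
    (heuc : ∀ x : K, 0 ≤ x → ∃ y : K, y * y = x)
    (hdim : Module.finrank K E = 2)
    (hsymm : ∀ x y : E, B x y = B y x)
    (hpos : ∀ x : E, x ≠ 0 → 0 < B x x)
    (i : E) (hi : B i i = 1)
    (a : K) (b : E) (c : K)
    (htp : cyc B (a, b, c) ((0 : K), i, (0 : K)) = 0)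
    (htt : cyc B (a, b, c) (a, b, c) = 1) :
    ∀ u : E, B i u < 0 →
      0 < B ((2 * a) • u + b) ((2 * a) • u + b) ∧
      ∃ lam : K, 0 < lam ∧ ∃ v : E, B i v < 0 ∧
        qc B u - (2 * cyc B (qc B u) (a, b, c)) • ((a, b, c) : K × E × K) = lam • qc B v := by
  intro u hu
  have hbi : B b i = 0 := by simpa [cyc] using htp
  have hib : B i b = 0 := by rw [hsymm]; exact hbi
  have hbb : B b b = 1 + 4 * a * c := by
    have h := htt; simp only [cyc] at h; linarith
  set w : E := (2 * a) • u + b with hw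
  have hwne : w ≠ 0 := by
    intro h
    have h1 : B i w = 2 * a * B i u := by
      simp [hw, map_add, map_smul, hib, smul_eq_mul]
    rw [h, map_zero] at h1
    have ha : a = 0 := by
      rcases mul_eq_zero.mp h1.symm with h' | h'
      · rcases mul_eq_zero.mp h' with h'' | h''
        · norm_num at h''
        · exact h''
      · exact absurd h' (ne_of_lt hu)
    rw [ha] at hw
    have hb : b = 0 := by
      have := hw; simp at this; rw [h] at this; exact this.symm
    rw [hb] at hbb
    simp [ha] at hbb
  have hlam : 0 < B w w := hpos w hwne
  have hlne : B w w ≠ 0 := ne_of_gt hlam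
  set s : K := cyc B (qc B u) (a, b, c) with hsdef
  have hs : s = -2 * B u b - 2 * c - 2 * a * B u u := by
    simp [hsdef, cyc, qc, map_smul, LinearMap.smul_apply, smul_eq_mul]
  have hub : B u b = B b u := hsymm u b
  have hww : B w w = 4 * a ^ 2 * B u u + 4 * a * B u b + B b b := by
    simp [hw, map_add, map_smul, LinearMap.smul_apply, LinearMap.add_apply, smul_eq_mul, hub]
    ring_nf
  have hlid : B w w = 1 - 2 * s * a := by
    rw [hww, hs, hbb]; ring
  refine ⟨hlam, B w w, hlam, (B w w)⁻¹ • (u + s • b), ?_, ?_⟩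
  · have : B i ((B w w)⁻¹ • (u + s • b)) = (B w w)⁻¹ * B i u := by
      simp [map_add, map_smul, hib, smul_eq_mul]
    rw [this]
    exact mul_neg_of_pos_of_neg (inv_pos.mpr hlam) hu
  · have hvv : B ((B w w)⁻¹ • (u + s • b)) ((B w w)⁻¹ • (u + s • b))
        = (B w w)⁻¹ * ((B w w)⁻¹ * (B u u + 2 * s * B u b + s ^ 2 * B b b)) := by
      simp [map_add, map_smul, LinearMap.smul_apply, LinearMap.add_apply, smul_eq_mul,
        hsymm b u]
      ring
    show ((1 : K) - (2 * s) * a, ((-2 : K) • u - (2 * s) • b : E), B u u - (2 * s) * c) = _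
    refine Prod.ext ?_ (Prod.ext ?_ ?_)
    · show (1 : K) - 2 * s * a = B w w * 1
      rw [hlid]; ring
    · show ((-2 : K) • u - (2 * s) • b : E)
        = B w w • ((-2 : K) • ((B w w)⁻¹ • (u + s • b)))
      rw [smul_smul, smul_smul, show B w w * -2 * (B w w)⁻¹ = -2 by field_simp]
      module
    · show B u u - 2 * s * c = B w w * B ((B w w)⁻¹ • (u + s • b)) ((B w w)⁻¹ • (u + s • b))
      have hX : B u u + 2 * s * B u b + s ^ 2 * B b b = B w w * (B u u - 2 * s * c) := by
        rw [hlid, hs, hbb]; ring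
      rw [hvv, hX]
      field_simp
end

section
/- (Proposition 3(a)) Let u, v be two distinct points of H and let λ = ⟨q(u), p⟩ / ⟨q(v), p⟩. Then λ > 0, and the cycle r = q(u) − λ·q(v) satisfies ⟨r, p⟩ = 0 and ⟨r, r⟩ = −2λ·⟨q(u), q(v)⟩ > 0; moreover the reflection along r maps q(u) to λ·q(v), i.e., q(u) − 2(⟨q(u), r⟩/⟨r, r⟩)·r = λ·q(v), and every cycle ℓ with ⟨ℓ, q(u)⟩ = 0 and ⟨ℓ, q(v)⟩ = 0 satisfies ⟨ℓ, r⟩ = 0. -/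
variable {K : Type*} [Field K] [LinearOrder K] [IsStrictOrderedRing K]
variable {E : Type*} [AddCommGroup E] [Module K E]

lemma cyc_sub_smul_right (B : LinearMap.BilinForm K E) (f g h : K × E × K) (c : K) :
    cyc B f (g - c • h) = cyc B f g - c * cyc B f h := by
  simp [cyc, Prod.sub_def, Prod.smul_def, map_sub, map_smul, smul_eq_mul]
  ring

lemma cyc_sub_smul_left (B : LinearMap.BilinForm K E) (f g h : K × E × K) (c : K) :
    cyc B (g - c • h) f = cyc B g f - c * cyc B h f := by
  simp [cyc, Prod.sub_def, Prod.smul_def, map_sub, map_smul, smul_eq_mul]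
  ring

lemma cyc_qp (B : LinearMap.BilinForm K E) (hsymm : ∀ x y : E, B x y = B y x)
    (i u : E) : cyc B (qc B u) ((0 : K), i, (0 : K)) = -2 * B i u := by
  simp [cyc, qc, map_smul, smul_eq_mul, hsymm u i]

lemma cyc_qq (B : LinearMap.BilinForm K E) (hsymm : ∀ x y : E, B x y = B y x)
    (u v : E) : cyc B (qc B u) (qc B v) = -2 * B (u - v) (u - v) := by
  simp [cyc, qc, map_smul, map_sub, smul_eq_mul, hsymm v u]
  ring

/-- Proposition 3(a): the reflection along `r = q(u) − λ·q(v)`, where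
`λ = ⟨q(u),p⟩/⟨q(v),p⟩`, maps `q(u)` to `λ·q(v)` and stabilizes the line through
`u` and `v`. -/
theorem prop3a_reflection_swapping_points
    (B : LinearMap.BilinForm K E)
    (heuc : ∀ x : K, 0 ≤ x → ∃ y : K, y * y = x)
    (hdim : Module.finrank K E = 2)
    (hsymm : ∀ x y : E, B x y = B y x)
    (hpos : ∀ x : E, x ≠ 0 → 0 < B x x)
    (i : E) (hi : B i i = 1)
    (u v : E) (hu : B i u < 0) (hv : B i v < 0) (huv : u ≠ v) :
    0 < cyc B (qc B u) ((0 : K), i, (0 : K)) / cyc B (qc B v) ((0 : K), i, (0 : K)) ∧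
    (let lam : K := cyc B (qc B u) ((0 : K), i, (0 : K)) / cyc B (qc B v) ((0 : K), i, (0 : K));
     let r : K × E × K := qc B u - lam • qc B v;
     cyc B r ((0 : K), i, (0 : K)) = 0 ∧
     cyc B r r = -2 * lam * cyc B (qc B u) (qc B v) ∧
     0 < cyc B r r ∧
     qc B u - (2 * (cyc B (qc B u) r / cyc B r r)) • r = lam • qc B v ∧
     ∀ l : K × E × K, cyc B l (qc B u) = 0 → cyc B l (qc B v) = 0 → cyc B l r = 0) := by
  have hup : cyc B (qc B u) ((0 : K), i, (0 : K)) = -2 * B i u := cyc_qp B hsymm i u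
  have hvp : cyc B (qc B v) ((0 : K), i, (0 : K)) = -2 * B i v := cyc_qp B hsymm i v
  have hupos : 0 < cyc B (qc B u) ((0 : K), i, (0 : K)) := by rw [hup]; nlinarith
  have hvpos : 0 < cyc B (qc B v) ((0 : K), i, (0 : K)) := by rw [hvp]; nlinarith
  have hlam : 0 < cyc B (qc B u) ((0 : K), i, (0 : K)) / cyc B (qc B v) ((0 : K), i, (0 : K)) :=
    div_pos hupos hvpos
  refine ⟨hlam, ?_⟩
  intro lam r
  have hrp : cyc B r ((0 : K), i, (0 : K)) = 0 := by
    rw [cyc_sub_smul_left, div_mul_cancel₀ _ (ne_of_gt hvpos), sub_self]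
  have huu : cyc B (qc B u) (qc B u) = 0 := by
    rw [cyc_qq B hsymm]; simp
  have hvv : cyc B (qc B v) (qc B v) = 0 := by
    rw [cyc_qq B hsymm]; simp
  have hqq : cyc B (qc B u) (qc B v) < 0 := by
    rw [cyc_qq B hsymm]
    have := hpos (u - v) (sub_ne_zero_of_ne huv)
    nlinarith
  have hsymc : ∀ f g : K × E × K, cyc B f g = cyc B g f := by
    intro f g; simp [cyc, hsymm f.2.1 g.2.1]; ring
  have hrr : cyc B r r = -2 * lam * cyc B (qc B u) (qc B v) := by
    show cyc B (qc B u - lam • qc B v) (qc B u - lam • qc B v) = _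
    rw [cyc_sub_smul_left, cyc_sub_smul_right, cyc_sub_smul_right, huu, hvv,
      hsymc (qc B v) (qc B u)]
    ring
  have hrrpos : 0 < cyc B r r := by
    rw [hrr]; nlinarith
  have hur : cyc B (qc B u) r = -lam * cyc B (qc B u) (qc B v) := by
    show cyc B (qc B u) (qc B u - lam • qc B v) = _
    rw [cyc_sub_smul_right, huu]; ring
  refine ⟨hrp, hrr, hrrpos, ?_, ?_⟩
  · have hcoef : 2 * (cyc B (qc B u) r / cyc B r r) = 1 := by
      have hX : cyc B (qc B u) (qc B v) ≠ 0 := ne_of_lt hqq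
      have hl : lam ≠ 0 := ne_of_gt hlam
      have ha : -lam * cyc B (qc B u) (qc B v) ≠ 0 := by
        exact mul_ne_zero (neg_ne_zero.mpr hl) hX
      rw [hur, hrr,
        show -2 * lam * cyc B (qc B u) (qc B v)
            = 2 * (-lam * cyc B (qc B u) (qc B v)) from by ring,
        mul_div_assoc', div_self (mul_ne_zero two_ne_zero ha)]
    rw [hcoef, one_smul]
    show qc B u - (qc B u - lam • qc B v) = lam • qc B v
    abel
  · intro l hlu hlv
    have : cyc B l r = cyc B l (qc B u) - lam * cyc B l (qc B v) := cyc_sub_smul_right B _ _ _ _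
    rw [this, hlu, hlv]; ring
end

section
/- (Proposition 4(c)) Let ℓ be a nonisotropic cycle with ⟨ℓ, p⟩ = 0, let u, v be two distinct points of H with ⟨ℓ, q(u)⟩ = ⟨ℓ, q(v)⟩ = 0, and let T : F → F be a linear map preserving the cycle pairing with T(p) = p, T(q(u)) = q(u) and T(q(v)) = q(v). Then T fixes every point of the line defined by ℓ: for every w ∈ H with ⟨ℓ, q(w)⟩ = 0, T(q(w)) = q(w). -/
variable {K : Type*} [Field K] [LinearOrder K] [IsStrictOrderedRing K]
variable {E : Type*} [AddCommGroup E] [Module K E]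

/-- Proposition 4(c): an orthogonal transformation of `F` fixing `p` and two distinct
points of a line fixes every point of that line. -/
theorem prop4c_fixes_line
    (B : LinearMap.BilinForm K E)
    (heuc : ∀ x : K, 0 ≤ x → ∃ y : K, y * y = x)
    (hdim : Module.finrank K E = 2)
    (hsymm : ∀ x y : E, B x y = B y x)
    (hpos : ∀ x : E, x ≠ 0 → 0 < B x x)
    (i : E) (hi : B i i = 1)
    (l : K × E × K) (hl : cyc B l l ≠ 0)
    (hlp : cyc B l ((0 : K), i, (0 : K)) = 0)
    (u v : E) (hu : B i u < 0) (hv : B i v < 0) (huv : u ≠ v)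
    (hlu : cyc B l (qc B u) = 0) (hlv : cyc B l (qc B v) = 0)
    (T : (K × E × K) →ₗ[K] (K × E × K))
    (hT : ∀ x y : K × E × K, cyc B (T x) (T y) = cyc B x y)
    (hTp : T ((0 : K), i, (0 : K)) = ((0 : K), i, (0 : K)))
    (hTu : T (qc B u) = qc B u) (hTv : T (qc B v) = qc B v) :
    ∀ w : E, B i w < 0 → cyc B l (qc B w) = 0 → T (qc B w) = qc B w := by
  intro w hw hlw
  obtain ⟨a, b, c⟩ := l
  have hi0 : i ≠ 0 := by
    intro h
    rw [h] at hi
    simp at hi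
  have hfin : Module.Finite K E := Module.finite_of_finrank_eq_succ hdim
  -- construct a second orthonormal vector j
  have hspan : (Submodule.span K {i} : Submodule K E) ≠ ⊤ := by
    intro h
    have h1 := finrank_span_singleton (K := K) hi0
    rw [h, finrank_top, hdim] at h1
    norm_num at h1
  obtain ⟨e, he⟩ : ∃ e : E, e ∉ Submodule.span K {i} := by
    by_contra h
    push_neg at h
    exact hspan (Submodule.eq_top_iff'.mpr h)
  obtain ⟨j0, hj0⟩ : ∃ z : E, z = e - B i e • i := ⟨_, rfl⟩
  have hj00 : j0 ≠ 0 := by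
    rw [hj0, sub_ne_zero]
    intro h
    exact he (by rw [h]; exact Submodule.smul_mem _ _ (Submodule.mem_span_singleton_self i))
  have hij0 : B i j0 = 0 := by
    rw [hj0]
    simp [map_sub, map_smul, hi, smul_eq_mul]
  have hp0 : 0 < B j0 j0 := hpos j0 hj00
  obtain ⟨s, hs⟩ := heuc (B j0 j0) hp0.le
  have hs0 : s ≠ 0 := by
    intro h
    rw [h, zero_mul] at hs
    exact absurd hs.symm (ne_of_gt hp0)
  obtain ⟨j, hjdef⟩ : ∃ z : E, z = s⁻¹ • j0 := ⟨_, rfl⟩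
  have hij : B i j = 0 := by
    rw [hjdef, map_smul, smul_eq_mul, hij0, mul_zero]
  have hji : B j i = 0 := by rw [hsymm]; exact hij
  have hjj : B j j = 1 := by
    simp only [hjdef, map_smul, LinearMap.smul_apply, smul_eq_mul, ← hs]
    field_simp
  -- every vector decomposes along i, j
  have hdecomp : ∀ x : E, x = B i x • i + B j x • j := by
    intro x
    by_contra hne
    have hdne : x - B i x • i - B j x • j ≠ 0 := by
      intro h
      exact hne (by rwa [sub_sub, sub_eq_zero] at h)
    obtain ⟨d, hddef⟩ : ∃ z : E, z = x - B i x • i - B j x • j := ⟨_, rfl⟩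
    have hd0 : d ≠ 0 := by rwa [hddef]
    have hdi : B i d = 0 := by
      simp [hddef, map_sub, map_smul, smul_eq_mul, hi, hij]
    have hdj : B j d = 0 := by
      simp [hddef, map_sub, map_smul, smul_eq_mul, hji, hjj]
    have hli : LinearIndependent K ![i, j, d] := by
      rw [Fintype.linearIndependent_iff]
      intro g hg
      have h0 : g 0 • i + g 1 • j + g 2 • d = 0 := by
        simpa [Fin.sum_univ_three] using hg
      have e1 : g 0 = 0 := by
        have h1 : B i (g 0 • i + g 1 • j + g 2 • d) = 0 := by rw [h0]; simp
        simpa [map_add, map_smul, smul_eq_mul, hi, hij, hdi] using h1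
      have e2 : g 1 = 0 := by
        have h1 : B j (g 0 • i + g 1 • j + g 2 • d) = 0 := by rw [h0]; simp
        simpa [map_add, map_smul, smul_eq_mul, hji, hjj, hdj] using h1
      have e3 : g 2 = 0 := by
        rw [e1, e2] at h0
        simp only [zero_smul, zero_add] at h0
        rcases smul_eq_zero.mp h0 with h | h
        · exact h
        · exact absurd h hd0
      intro k
      fin_cases k <;> assumption
    have hcard := hli.fintype_card_le_finrank
    rw [hdim] at hcard
    norm_num at hcard
  have hkey : ∀ x y : E, B x y = B i x * B i y + B j x * B j y := by
    intro x y
    conv_lhs => rw [hdecomp x, hdecomp y]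
    simp only [map_add, map_smul, LinearMap.add_apply, LinearMap.smul_apply, smul_eq_mul,
      hi, hij, hji, hjj]
    ring
  -- scalar forms of the hypotheses
  have hbi : B i b = 0 := by
    have h0 : B b i - 2 * a * 0 - 2 * 0 * c = 0 := hlp
    rw [hsymm]
    linear_combination h0
  have hll : B j b * B j b - 4 * (a * c) ≠ 0 := by
    intro h0
    have h1 : B b b - 2 * a * c - 2 * a * c ≠ 0 := hl
    exact h1 (by rw [hkey b b]; linear_combination h0 + B i b * hbi)
  have hEu : a * B u u + B j b * B j u + c = 0 := by
    have h : B b ((-2 : K) • u) - 2 * a * (B u u) - 2 * 1 * c = 0 := hlu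
    rw [map_smul, smul_eq_mul, hkey b u] at h
    linear_combination (-1/2 : K) * h - B i u * hbi
  have hEv : a * B v v + B j b * B j v + c = 0 := by
    have h : B b ((-2 : K) • v) - 2 * a * (B v v) - 2 * 1 * c = 0 := hlv
    rw [map_smul, smul_eq_mul, hkey b v] at h
    linear_combination (-1/2 : K) * h - B i v * hbi
  have hEw : a * B w w + B j b * B j w + c = 0 := by
    have h : B b ((-2 : K) • w) - 2 * a * (B w w) - 2 * 1 * c = 0 := hlw
    rw [map_smul, smul_eq_mul, hkey b w] at h
    linear_combination (-1/2 : K) * h - B i w * hbi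
  -- it suffices to express qc B w in terms of qc B u, qc B v and p
  have main : ∀ α β γ : K, α + β = 1 → α * B j u + β * B j v = B j w →
      γ = -2 * B i w + 2 * α * B i u + 2 * β * B i v →
      α * B u u + β * B v v = B w w → T (qc B w) = qc B w := by
    intro α β γ hsum h2 h1 h3
    have hvec : (-2 : K) • w = α • ((-2 : K) • u) + β • ((-2 : K) • v) + γ • i := by
      rw [hdecomp u, hdecomp v, hdecomp w]
      match_scalars
      · linear_combination -h1
      · linear_combination (2 : K) * h2
    have hq : qc B w = α • qc B u + β • qc B v + γ • ((0 : K), i, (0 : K)) := by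
      simp only [qc, Prod.smul_mk, Prod.mk_add_mk, Prod.mk.injEq, smul_eq_mul]
      refine ⟨by linear_combination -hsum, hvec, by linear_combination -h3⟩
    rw [hq, map_add, map_add, map_smul, map_smul, map_smul, hTu, hTv, hTp]
  by_cases hcase : B j u = B j v
  · -- the chord is "vertical": u, v, w share the j-coordinate
    have hne1 : B i u ≠ B i v := by
      intro h
      apply huv
      rw [hdecomp u, hdecomp v, h, hcase]
    have hsum0 : B i u + B i v < 0 := by linarith
    have hd : (B i u - B i v) * (B i u + B i v) ≠ 0 :=
      mul_ne_zero (sub_ne_zero.mpr hne1) (ne_of_lt hsum0)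
    have ha0 : a = 0 := by
      have h : a * ((B i u - B i v) * (B i u + B i v)) = 0 := by
        linear_combination hEu - hEv - a * hkey u u + a * hkey v v
          - (a * (B j u + B j v) + B j b) * hcase
      rcases mul_eq_zero.mp h with h' | h'
      · exact h'
      · exact absurd h' hd
    have hb2 : B j b ≠ 0 := by
      intro h0
      exact hll (by rw [ha0, h0]; ring)
    have hw2 : B j w = B j u := by
      have h : B j b * (B j w - B j u) = 0 := by
        linear_combination hEw - hEu - (B w w - B u u) * ha0
      rcases mul_eq_zero.mp h with h' | h'
      · exact absurd h' hb2
      · exact sub_eq_zero.mp h'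
    have hd' : B i u * B i u - B i v * B i v ≠ 0 := by
      intro h
      exact hd (by linear_combination h)
    have hαkey : ((B i w * B i w - B i v * B i v) / (B i u * B i u - B i v * B i v))
        * (B i u * B i u - B i v * B i v) = B i w * B i w - B i v * B i v :=
      div_mul_cancel₀ _ hd'
    have h2 : ((B i w * B i w - B i v * B i v) / (B i u * B i u - B i v * B i v)) * B j u
        + (1 - (B i w * B i w - B i v * B i v) / (B i u * B i u - B i v * B i v)) * B j v
        = B j w := by
      rw [hw2, hcase]
      ring
    have h3 : ((B i w * B i w - B i v * B i v) / (B i u * B i u - B i v * B i v)) * B u u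
        + (1 - (B i w * B i w - B i v * B i v) / (B i u * B i u - B i v * B i v)) * B v v
        = B w w := by
      rw [hkey u u, hkey v v, hkey w w, hw2, hcase]
      linear_combination hαkey
    refine main _ _ _ ?_ h2 rfl h3
    ring
  · -- the generic case: u and v have different j-coordinates
    have hd : B j v - B j u ≠ 0 := sub_ne_zero.mpr (Ne.symm hcase)
    have ha : a ≠ 0 := by
      intro ha0
      have hbb : B j b * (B j u - B j v) = 0 := by
        linear_combination hEu - hEv - (B u u - B v v) * ha0
      have hb0 : B j b = 0 := by
        rcases mul_eq_zero.mp hbb with h' | h'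
        · exact h'
        · exact absurd (sub_eq_zero.mp h') hcase
      exact hll (by rw [ha0, hb0]; ring)
    have hβkey : ((B j w - B j u) / (B j v - B j u)) * (B j v - B j u) = B j w - B j u :=
      div_mul_cancel₀ _ hd
    have h2 : (1 - (B j w - B j u) / (B j v - B j u)) * B j u
        + ((B j w - B j u) / (B j v - B j u)) * B j v = B j w := by
      linear_combination hβkey
    have h3 : (1 - (B j w - B j u) / (B j v - B j u)) * B u u
        + ((B j w - B j u) / (B j v - B j u)) * B v v = B w w := by
      refine mul_left_cancel₀ ha ?_
      linear_combination (1 - (B j w - B j u) / (B j v - B j u)) * hEu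
        + ((B j w - B j u) / (B j v - B j u)) * hEv - hEw - B j b * h2
    refine main _ _ _ ?_ h2 rfl h3
    ring
end

section
/- (Proposition 4(b)) Let u ∈ H and let ℓ be a cycle with ⟨ℓ, ℓ⟩ > 0, ⟨ℓ, p⟩ = 0 and ⟨ℓ, q(u)⟩ = 0. Then there exists a cycle n ∈ F with ⟨n, n⟩ > 0 that is orthogonal to p, q(u) and ℓ (⟨n,p⟩ = ⟨n,q(u)⟩ = ⟨n,ℓ⟩ = 0), every cycle orthogonal to all of p, q(u) and ℓ is a scalar multiple of n, and for every v ∈ H with v ≠ u and ⟨ℓ, q(v)⟩ = 0 one has ⟨n, q(v)⟩ ≠ 0. -/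
variable {K : Type*} [Field K] [LinearOrder K] [IsStrictOrderedRing K]
variable {E : Type*} [AddCommGroup E] [Module K E]

set_option maxHeartbeats 4000000

/-- Proposition 4(b): for a point `u` on the line of `ℓ`, there is a positive-norm
cycle `n` orthogonal to `p`, `q(u)` and `ℓ`, unique up to scalar, and `⟨n, q(v)⟩ ≠ 0`
for every other point `v` of the line. -/
theorem prop4b_orthogonal_cycle
    (B : LinearMap.BilinForm K E)
    (heuc : ∀ x : K, 0 ≤ x → ∃ y : K, y * y = x)
    (hdim : Module.finrank K E = 2)
    (hsymm : ∀ x y : E, B x y = B y x)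
    (hpos : ∀ x : E, x ≠ 0 → 0 < B x x)
    (i : E) (hi : B i i = 1)
    (u : E) (hu : B i u < 0)
    (l : K × E × K) (hl : 0 < cyc B l l)
    (hlp : cyc B l ((0 : K), i, (0 : K)) = 0)
    (hlu : cyc B l (qc B u) = 0) :
    ∃ n : K × E × K, 0 < cyc B n n ∧
      cyc B n ((0 : K), i, (0 : K)) = 0 ∧ cyc B n (qc B u) = 0 ∧ cyc B n l = 0 ∧
      (∀ n' : K × E × K, cyc B n' ((0 : K), i, (0 : K)) = 0 →
        cyc B n' (qc B u) = 0 → cyc B n' l = 0 → ∃ c : K, n' = c • n) ∧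
      ∀ v : E, B i v < 0 → v ≠ u → cyc B l (qc B v) = 0 → cyc B n (qc B v) ≠ 0 := by
  classical
  have hE : FiniteDimensional K E := FiniteDimensional.of_finrank_pos (by omega)
  have hine : i ≠ 0 := by
    intro h; rw [h] at hi; simp at hi
  -- construct j orthonormal to i
  obtain ⟨w, hw⟩ : ∃ w, w ∉ Submodule.span K {i} := by
    by_contra h
    push_neg at h
    have htop : Submodule.span K {i} = ⊤ := Submodule.eq_top_iff'.2 h
    have h1 : Module.finrank K (Submodule.span K {i}) = 1 :=
      finrank_span_singleton hine
    rw [htop] at h1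
    rw [finrank_top, hdim] at h1
    omega
  have hiw' : B i (w - B i w • i) = 0 := by
    simp [map_sub, map_smul, hi]
  have hw'ne : (w - B i w • i) ≠ 0 := by
    intro h
    apply hw
    rw [sub_eq_zero.1 h]
    exact Submodule.smul_mem _ _ (Submodule.mem_span_singleton_self i)
  have hw'pos : 0 < B (w - B i w • i) (w - B i w • i) := hpos _ hw'ne
  obtain ⟨s, hs⟩ := heuc _ hw'pos.le
  have hsne : s ≠ 0 := by
    intro h; rw [h, zero_mul] at hs; exact hw'pos.ne' hs.symm
  obtain ⟨j, hij, hjj⟩ : ∃ j : E, B i j = 0 ∧ B j j = 1 := by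
    refine ⟨s⁻¹ • (w - B i w • i), by simp [map_smul, hiw'], ?_⟩
    simp only [map_smul, LinearMap.smul_apply, smul_eq_mul]
    rw [← hs]; field_simp
  have hji : B j i = 0 := by rw [hsymm]; exact hij
  -- spanning
  have hspan : ∀ x : E, ∃ a b : K, x = a • i + b • j := by
    have li : LinearIndependent K ![i, j] := by
      rw [LinearIndependent.pair_iff]
      intro s t hst
      have h1 : B i (s • i + t • j) = s := by simp [map_smul, hi, hij]
      have h2 : B j (s • i + t • j) = t := by simp [map_smul, hji, hjj]
      rw [hst] at h1 h2
      simp at h1 h2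
      exact ⟨h1.symm, h2.symm⟩
    have hsp : Submodule.span K {i, j} = ⊤ := by
      have := li.span_eq_top_of_card_eq_finrank (by simp [hdim])
      rw [show Set.range ![i,j] = {i,j} by
        simp [Matrix.range_cons]; exact Set.pair_comm j i] at this
      exact this
    intro x
    have : x ∈ Submodule.span K {i, j} := hsp ▸ Submodule.mem_top
    obtain ⟨a, b, hab⟩ := Submodule.mem_span_pair.1 this
    exact ⟨a, b, hab.symm⟩
  -- the fundamental computation
  have hB : ∀ p q r t : K, B (p • i + q • j) (r • i + t • j) = p * r + q * t := by
    intro p q r t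
    simp [map_add, map_smul, hi, hij, hji, hjj]
    ring
  -- coordinates
  obtain ⟨u1, u2, hudef⟩ := hspan u
  obtain ⟨b1, b2, hbdef⟩ := hspan l.2.1
  obtain ⟨a, hadef⟩ : ∃ a : K, l.1 = a := ⟨_, rfl⟩
  obtain ⟨c, hcdef⟩ : ∃ c : K, l.2.2 = c := ⟨_, rfl⟩
  have hu1 : u1 < 0 := by
    have : B i u = u1 := by
      rw [hudef]; simp [map_smul, hi, hij]
    linarith [hu, this.symm ▸ hu]
  have hu1ne : u1 ≠ 0 := ne_of_lt hu1
  have hnu : B u u = u1 * u1 + u2 * u2 := by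
    rw [hudef, hB]
  -- b1 = 0
  have hb1 : b1 = 0 := by
    have := hlp
    simp only [cyc] at this
    rw [hbdef] at this
    have h2 : B (b1 • i + b2 • j) i = b1 := by
      simp [map_smul, hi, hji]
    rw [h2] at this
    linarith [this]
  have hbl : l.2.1 = b2 • j := by rw [hbdef, hb1]; simp
  -- scalar form of hypotheses
  have hc' : b2 * u2 + a * (u1 * u1 + u2 * u2) + c = 0 := by
    have := hlu
    simp only [cyc, qc] at this
    rw [hbl, hudef, hadef, hcdef] at this
    have h2 : B (b2 • j) ((-2 : K) • (u1 • i + u2 • j)) = b2 * (-2 * u2) := by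
      rw [show (b2 • j : E) = (0:K) • i + b2 • j by simp,
          show ((-2:K) • (u1 • i + u2 • j) : E) = (-2*u1) • i + (-2*u2) • j by
            rw [smul_add, smul_smul, smul_smul], hB]
      ring
    rw [h2, hB] at this
    linarith [this]
  have hll : 0 < b2 * b2 - 4 * a * c := by
    have := hl
    simp only [cyc] at this
    rw [hbl, hadef, hcdef] at this
    have h2 : B (b2 • j) (b2 • j) = b2 * b2 := by
      rw [show (b2 • j : E) = (0:K) • i + b2 • j by simp, hB]; ring
    rw [h2] at this
    linarith [this]
  -- the cycle n
  obtain ⟨A, hAdef⟩ : ∃ A : K, A = b2 + 2 * a * u2 := ⟨_, rfl⟩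
  obtain ⟨G, hGdef⟩ : ∃ G : K, G = -2 * (2 * a * (u1 * u1 + u2 * u2) + b2 * u2) := ⟨_, rfl⟩
  obtain ⟨C, hCdef⟩ : ∃ C : K, C = -(G * u2) - A * (u1 * u1 + u2 * u2) := ⟨_, rfl⟩
  have key1 : b2 * b2 - 4 * a * c = A * A + 4 * a * a * (u1 * u1) := by
    rw [hAdef]; linear_combination (-4 * a) * hc'
  have hApos : 0 < A * A + 4 * a * a * (u1 * u1) := key1 ▸ hll
  refine ⟨(A, G • j, C), ?_, ?_, ?_, ?_, ?_, ?_⟩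
  · -- positive norm
    simp only [cyc]
    have h2 : B (G • j) (G • j) = G * G := by
      rw [show (G • j : E) = (0:K) • i + G • j by simp, hB]; ring
    rw [h2]
    show 0 < G * G - 2 * A * C - 2 * A * C
    by_cases hA : A = 0
    · have hb2 : b2 = -(2 * a * u2) := by rw [hAdef] at hA; linarith
      have haane : 0 < a * a * (u1 * u1) := by
        rw [hA] at hApos; nlinarith [hApos]
      have hane : a ≠ 0 := by
        intro h; rw [h] at haane; simp at haane
      have hGval : G = -4 * a * (u1 * u1) := by
        rw [hGdef, hb2]; ring
      have hGne : G ≠ 0 := by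
        rw [hGval]
        intro h
        have : a * (u1 * u1) = 0 := by linarith
        rcases mul_eq_zero.1 this with h' | h'
        · exact hane h'
        · exact hu1ne (by nlinarith)
      rw [hA, hCdef, hA]
      nlinarith [mul_self_pos.2 hGne]
    · rw [hCdef]
      nlinarith [sq_nonneg (G + 2 * A * u2), mul_pos (mul_self_pos.2 hA) (mul_self_pos.2 hu1ne)]
  · -- orth to p
    simp only [cyc]
    have h2 : B (G • j) i = 0 := by simp [map_smul, hji]
    rw [h2]; ring
  · -- orth to q u
    simp only [cyc, qc]
    rw [hnu, hudef]
    have h2 : B (G • j) ((-2 : K) • (u1 • i + u2 • j)) = G * (-2 * u2) := by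
      rw [show (G • j : E) = (0:K) • i + G • j by simp,
          show ((-2:K) • (u1 • i + u2 • j) : E) = (-2*u1) • i + (-2*u2) • j by
            rw [smul_add, smul_smul, smul_smul], hB]
      ring
    rw [h2, hCdef]
    ring
  · -- orth to l
    simp only [cyc]
    rw [hbl, hadef, hcdef]
    have h2 : B (G • j) (b2 • j) = G * b2 := by
      rw [show (G • j : E) = (0:K) • i + G • j by simp,
          show (b2 • j : E) = (0:K) • i + b2 • j by simp, hB]
      ring
    rw [h2, hCdef, hGdef, hAdef]
    linear_combination (-2 * (b2 + 2*a*u2)) * hc'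
  · -- uniqueness
    rintro ⟨A', bn, C'⟩ h1 h2 h3
    obtain ⟨d1, d2, hdn⟩ := hspan bn
    simp only [cyc, qc] at h1 h2 h3
    rw [hdn] at h1 h2 h3
    rw [hadef, hcdef] at h3
    have e1 : d1 = 0 := by
      have : B (d1 • i + d2 • j) i = d1 := by simp [map_smul, hi, hji]
      rw [this] at h1; linarith [h1]
    have hq2 : B (d1 • i + d2 • j) ((-2 : K) • u) = d1 * (-2 * u1) + d2 * (-2 * u2) := by
      rw [hudef, show ((-2:K) • (u1 • i + u2 • j) : E) = (-2*u1) • i + (-2*u2) • j by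
          rw [smul_add, smul_smul, smul_smul], hB]
    rw [hq2, hnu, e1] at h2
    have e2 : d2 * u2 + A' * (u1 * u1 + u2 * u2) + C' = 0 := by linarith [h2]
    rw [hbl] at h3
    have hq3 : B (d1 • i + d2 • j) (b2 • j) = d2 * b2 := by
      rw [show (b2 • j : E) = (0:K) • i + b2 • j by simp, hB]; ring
    rw [hq3] at h3
    -- h3 : d2 * b2 - 2 * A' * c - 2 * a * C' = 0
    have e3 : d2 * A - A' * G = 0 := by
      rw [hAdef, hGdef]
      linear_combination h3 + 2 * a * e2 + 2 * A' * hc'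
    by_cases hA : A = 0
    · -- then G ≠ 0
      have hb2 : b2 = -(2 * a * u2) := by rw [hAdef] at hA; linarith
      have haane : 0 < a * a * (u1 * u1) := by rw [hA] at hApos; nlinarith [hApos]
      have hane : a ≠ 0 := by intro h; rw [h] at haane; simp at haane
      have hGval : G = -4 * a * (u1 * u1) := by rw [hGdef, hb2]; ring
      have hGne : G ≠ 0 := by
        rw [hGval]; intro h
        have : a * (u1 * u1) = 0 := by linarith
        rcases mul_eq_zero.1 this with h' | h'
        · exact hane h'
        · exact hu1ne (by nlinarith)
      refine ⟨d2 / G, ?_⟩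
      have hA' : A' = 0 := by
        rw [hA] at e3
        have : A' * G = 0 := by linarith
        rcases mul_eq_zero.1 this with h' | h'
        · exact h'
        · exact absurd h' hGne
      have hd2 : d2 = d2 / G * G := by field_simp
      have hGC : G * C' = d2 * C := by
        linear_combination G * e2 - d2 * hCdef + (u1 * u1 + u2 * u2) * e3
      refine Prod.ext ?_ (Prod.ext ?_ ?_)
      · show A' = d2 / G * A
        rw [hA, hA']; ring
      · show bn = (d2 / G) • (G • j)
        rw [smul_smul, hdn, e1, ← hd2]; simp
      · show C' = d2 / G * C
        field_simp
        linear_combination hGC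
    · refine ⟨A' / A, ?_⟩
      have hd2 : d2 = A' / A * G := by
        field_simp
        linarith [e3]
      have hAC : A * C' = A' * C := by
        linear_combination A * e2 - A' * hCdef - u2 * e3
      refine Prod.ext ?_ (Prod.ext ?_ ?_)
      · show A' = A' / A * A
        field_simp
      · show bn = (A' / A) • (G • j)
        rw [smul_smul, hdn, e1, ← hd2]; simp
      · show C' = A' / A * C
        field_simp
        linear_combination hAC
  · -- separating points
    intro v hv hvne hlv
    obtain ⟨v1, v2, hvdef⟩ := hspan v
    have hv1 : v1 < 0 := by
      have : B i v = v1 := by rw [hvdef]; simp [map_smul, hi, hij]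
      linarith [this ▸ hv]
    have hnv : B v v = v1 * v1 + v2 * v2 := by rw [hvdef, hB]
    have ev : b2 * v2 + a * (v1 * v1 + v2 * v2) + c = 0 := by
      have := hlv
      simp only [cyc, qc] at this
      rw [hbl, hvdef, hadef, hcdef] at this
      have h2 : B (b2 • j) ((-2 : K) • (v1 • i + v2 • j)) = b2 * (-2 * v2) := by
        rw [show (b2 • j : E) = (0:K) • i + b2 • j by simp,
            show ((-2:K) • (v1 • i + v2 • j) : E) = (-2*v1) • i + (-2*v2) • j by
              rw [smul_add, smul_smul, smul_smul], hB]
        ring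
      rw [h2, hB] at this
      linarith [this]
    intro hcon
    simp only [cyc, qc] at hcon
    have h2 : B (G • j) ((-2 : K) • v) = G * (-2 * v2) := by
      rw [hvdef, show (G • j : E) = (0:K) • i + G • j by simp,
          show ((-2:K) • (v1 • i + v2 • j) : E) = (-2*v1) • i + (-2*v2) • j by
            rw [smul_add, smul_smul, smul_smul], hB]
      ring
    rw [h2, hnv] at hcon
    -- hcon : G * (-2*v2) - 2*A*(v1²+v2²) - 2·1·C = 0
    have f1 : G * (v2 - u2) + A * ((v1*v1+v2*v2) - (u1*u1+u2*u2)) = 0 := by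
      rw [hCdef] at hcon; linarith [hcon]
    have f2 : b2 * (v2 - u2) + a * ((v1*v1+v2*v2) - (u1*u1+u2*u2)) = 0 := by
      linarith [ev, hc']
    have det : G * a - A * b2 = -(A * A + 4 * a * a * (u1 * u1)) := by
      rw [hGdef, hAdef]; ring
    have hX : v2 - u2 = 0 := by
      have hcomb : (v2 - u2) * (G * a - A * b2) = 0 := by
        linear_combination a * f1 - A * f2
      rcases mul_eq_zero.1 hcomb with h' | h'
      · exact h'
      · rw [det] at h'; linarith [hApos]
    have hY : (v1*v1+v2*v2) - (u1*u1+u2*u2) = 0 := by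
      have f1' : A * ((v1*v1+v2*v2) - (u1*u1+u2*u2)) = 0 := by
        linear_combination f1 - G * hX
      have f2' : a * ((v1*v1+v2*v2) - (u1*u1+u2*u2)) = 0 := by
        linear_combination f2 - b2 * hX
      by_cases hA : A = 0
      · have hane : a ≠ 0 := by
          intro h
          rw [hA, h] at hApos
          simp at hApos
        rcases mul_eq_zero.1 f2' with h' | h'
        · exact absurd h' hane
        · exact h'
      · rcases mul_eq_zero.1 f1' with h' | h'
        · exact absurd h' hA
        · exact h'
    have hv2 : v2 = u2 := by linarith
    have hv1e : v1 = u1 := by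
      have hfac : (v1 - u1) * (v1 + u1) = 0 := by
        linear_combination hY - (v2 + u2) * hX
      rcases mul_eq_zero.1 hfac with h' | h'
      · linarith
      · linarith
    exact hvne (by rw [hvdef, hudef, hv1e, hv2])
end

section
/- (Intersection criterion) Let ℓ and m be nonisotropic cycles with ⟨ℓ, p⟩ = 0 and ⟨m, p⟩ = 0 that are not scalar multiples of each other. Then there exists a point w ∈ H with ⟨ℓ, q(w)⟩ = 0 and ⟨m, q(w)⟩ = 0 if and only if the span of ℓ and m is anisotropic, i.e., ⟨x·ℓ + y·m, x·ℓ + y·m⟩ ≠ 0 for all (x, y) ∈ K × K with (x, y) ≠ (0, 0). -/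
variable {K : Type*} [Field K] [LinearOrder K] [IsStrictOrderedRing K]
variable {E : Type*} [AddCommGroup E] [Module K E]

lemma euclid_neg_sqrt' {K : Type*} [Field K] [LinearOrder K] [IsStrictOrderedRing K]
    (heuc : ∀ x : K, 0 ≤ x → ∃ y : K, y * y = x) {x : K} (hx : 0 < x) :
    ∃ s : K, s < 0 ∧ s * s = x := by
  obtain ⟨y, hy⟩ := heuc x hx.le
  have hy0 : y ≠ 0 := by rintro rfl; rw [mul_zero] at hy; exact hx.ne hy
  rcases hy0.lt_or_gt with h | h
  · exact ⟨y, h, hy⟩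
  · exact ⟨-y, neg_neg_of_pos h, by rw [neg_mul_neg]; exact hy⟩

lemma alg_core' {K : Type*} [Field K] [LinearOrder K] [IsStrictOrderedRing K]
    (heuc : ∀ x : K, 0 ≤ x → ∃ y : K, y * y = x)
    (lA lB lC mA mB mC : K)
    (hP : lB*lB - 4*lA*lC ≠ 0) (hS : mB*mB - 4*mA*mC ≠ 0)
    (hnp1 : ∀ c : K, ¬(lA = c*mA ∧ lB = c*mB ∧ lC = c*mC)) :
    (∃ s t : K, s < 0 ∧ lA*(s*s+t*t)+lB*t+lC = 0 ∧ mA*(s*s+t*t)+mB*t+mC = 0) ↔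
    (∀ x y : K, (x,y) ≠ ((0:K),(0:K)) →
      x*x*(lB*lB-4*lA*lC) + 2*(x*y)*(lB*mB-2*lA*mC-2*mA*lC) + y*y*(mB*mB-4*mA*mC) ≠ 0) := by
  constructor
  · rintro ⟨s, t, hs, h1, h2⟩ x y hxy hQ
    have hQ' : (x*lB+y*mB)*(x*lB+y*mB) - 4*(x*lA+y*mA)*(x*lC+y*mC) = 0 := by
      linear_combination hQ
    have heq : (x*lA+y*mA)*(s*s+t*t) + (x*lB+y*mB)*t + (x*lC+y*mC) = 0 := by
      linear_combination x*h1 + y*h2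
    by_cases hA : x*lA+y*mA = 0
    · have hB : x*lB+y*mB = 0 := by
        have h0 : (x*lB+y*mB)*(x*lB+y*mB) = 0 := by rw [hA] at hQ'; linarith
        exact mul_self_eq_zero.mp h0
      have hC : x*lC+y*mC = 0 := by rw [hA, hB] at heq; linarith
      by_cases hx : x = 0
      · have hy : y ≠ 0 := by
          intro h; exact hxy (by rw [hx, h])
        rw [hx] at hA hB hC
        have hmA : mA = 0 := (mul_eq_zero.mp (by linarith)).resolve_left hy
        have hmB : mB = 0 := (mul_eq_zero.mp (by linarith)).resolve_left hy
        have hmC : mC = 0 := (mul_eq_zero.mp (by linarith)).resolve_left hy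
        exact hS (by rw [hmA, hmB, hmC]; ring)
      · refine hnp1 (-y/x) ⟨?_, ?_, ?_⟩ <;> field_simp <;> linarith
    · have hps : 0 < ((x*lA+y*mA)*s)*((x*lA+y*mA)*s) :=
        mul_self_pos.mpr (mul_ne_zero hA hs.ne)
      have hkey : 4*(((x*lA+y*mA)*s)*((x*lA+y*mA)*s))
          + (2*(x*lA+y*mA)*t+(x*lB+y*mB))*(2*(x*lA+y*mA)*t+(x*lB+y*mB)) = 0 := by
        linear_combination 4*(x*lA+y*mA)*heq + hQ'
      nlinarith [sq_nonneg (2*(x*lA+y*mA)*t + (x*lB+y*mB))]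
  · intro haniso
    have hG : 0 < (lB*lB-4*lA*lC)*(mB*mB-4*mA*mC) - (lB*mB-2*lA*mC-2*mA*lC)*(lB*mB-2*lA*mC-2*mA*lC) := by
      rcases lt_or_ge ((lB*mB-2*lA*mC-2*mA*lC)*(lB*mB-2*lA*mC-2*mA*lC) - (lB*lB-4*lA*lC)*(mB*mB-4*mA*mC)) 0 with h | h
      · linarith
      · exfalso
        obtain ⟨d, hd⟩ := heuc _ h
        refine haniso (d - (lB*mB-2*lA*mC-2*mA*lC)) (lB*lB-4*lA*lC)
          (fun hc => hP (congrArg Prod.snd hc)) ?_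
        linear_combination (lB*lB-4*lA*lC) * hd
    have hΔ : 0 < (lB*mC - mB*lC)*(lA*mB - mA*lB) - (lA*mC - mA*lC)*(lA*mC - mA*lC) := by
      nlinarith [hG]
    have hDne : lA*mB - mA*lB ≠ 0 := by
      intro h
      rw [h] at hΔ
      nlinarith [sq_nonneg (lA*mC - mA*lC)]
    have hrt : 0 < (lB*mC - mB*lC)/(lA*mB - mA*lB)
        - ((mA*lC - lA*mC)/(lA*mB - mA*lB))*((mA*lC - lA*mC)/(lA*mB - mA*lB)) := by
      have heq2 : (lB*mC - mB*lC)/(lA*mB - mA*lB)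
          - ((mA*lC - lA*mC)/(lA*mB - mA*lB))*((mA*lC - lA*mC)/(lA*mB - mA*lB))
          = ((lB*mC - mB*lC)*(lA*mB - mA*lB) - (lA*mC - mA*lC)*(lA*mC - mA*lC))
            / ((lA*mB - mA*lB)*(lA*mB - mA*lB)) := by
        field_simp
        ring
      rw [heq2]
      exact div_pos hΔ (mul_self_pos.mpr hDne)
    obtain ⟨s, hs, hss⟩ := euclid_neg_sqrt' heuc hrt
    have hsum : s*s + ((mA*lC - lA*mC)/(lA*mB - mA*lB))*((mA*lC - lA*mC)/(lA*mB - mA*lB))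
        = (lB*mC - mB*lC)/(lA*mB - mA*lB) := by rw [hss]; ring
    have ht1 : lA*((lB*mC - mB*lC)/(lA*mB - mA*lB))
        + lB*((mA*lC - lA*mC)/(lA*mB - mA*lB)) + lC = 0 := by
      rw [← mul_div_assoc, ← mul_div_assoc, ← add_div, div_add' _ _ _ hDne, div_eq_zero_iff]
      left
      ring
    have ht2 : mA*((lB*mC - mB*lC)/(lA*mB - mA*lB))
        + mB*((mA*lC - lA*mC)/(lA*mB - mA*lB)) + mC = 0 := by
      rw [← mul_div_assoc, ← mul_div_assoc, ← add_div, div_add' _ _ _ hDne, div_eq_zero_iff]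
      left
      ring
    exact ⟨s, (mA*lC - lA*mC)/(lA*mB - mA*lB), hs,
      by rw [hsum]; exact ht1, by rw [hsum]; exact ht2⟩

lemma exists_ortho_basis'
    (B : LinearMap.BilinForm K E)
    (heuc : ∀ x : K, 0 ≤ x → ∃ y : K, y * y = x)
    (hdim : Module.finrank K E = 2)
    (hsymm : ∀ x y : E, B x y = B y x)
    (hpos : ∀ x : E, x ≠ 0 → 0 < B x x)
    (i : E) (hi : B i i = 1) :
    ∃ j : E, B i j = 0 ∧ B j j = 1 ∧ ∀ w : E, w = B i w • i + B j w • j := by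
  have hi0 : i ≠ 0 := by
    intro h
    rw [h] at hi; simp at hi
  have hne : Submodule.span K {i} ≠ ⊤ := by
    intro h
    have h1 := finrank_span_singleton (K := K) hi0
    rw [h, finrank_top, hdim] at h1
    exact absurd h1 (by norm_num)
  have hv : ∃ v : E, v ∉ Submodule.span K ({i} : Set E) := by
    by_contra h
    push_neg at h
    exact hne (Submodule.eq_top_iff'.mpr h)
  obtain ⟨v, hv⟩ := hv
  have hj0 : v - B i v • i ≠ 0 := by
    intro h
    exact hv (Submodule.mem_span_singleton.mpr ⟨B i v, by linear_combination (norm := module) -h⟩)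
  obtain ⟨u, hu⟩ := heuc _ (hpos _ hj0).le
  have hu0 : u ≠ 0 := by
    intro h
    rw [h, mul_zero] at hu
    exact (hpos _ hj0).ne' hu.symm
  set j := u⁻¹ • (v - B i v • i) with hjdef
  have hij : B i j = 0 := by
    simp [hjdef, map_sub, map_smul, smul_eq_mul, hi]
  have hji : B j i = 0 := by rw [hsymm]; exact hij
  have hjj : B j j = 1 := by
    simp only [hjdef, map_smul, LinearMap.smul_apply, smul_eq_mul]
    rw [← hu]
    field_simp
  refine ⟨j, hij, hjj, ?_⟩
  have hind : LinearIndependent K ![i, j] := by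
    rw [LinearIndependent.pair_iff]
    intro s t hst
    have h1 : B i (s • i + t • j) = s := by
      simp [map_add, map_smul, smul_eq_mul, hi, hij]
    have h2 : B j (s • i + t • j) = t := by
      simp [map_add, map_smul, smul_eq_mul, hji, hjj]
    rw [hst, map_zero] at h1 h2
    exact ⟨h1.symm, h2.symm⟩
  have hspan := (basisOfLinearIndependentOfCardEqFinrank hind (by simp [hdim])).span_eq
  rw [coe_basisOfLinearIndependentOfCardEqFinrank] at hspan
  intro w
  have hw : w ∈ Submodule.span K {i, j} := by
    have : Set.range ![i, j] = {i, j} := by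
      simp [Matrix.range_cons, Matrix.range_empty, Set.pair_comm]
    rw [← this, hspan]
    trivial
  obtain ⟨a, b, hab⟩ := Submodule.mem_span_pair.mp hw
  have ha : B i w = a := by
    rw [← hab]; simp [map_add, map_smul, smul_eq_mul, hi, hij]
  have hb : B j w = b := by
    rw [← hab]; simp [map_add, map_smul, smul_eq_mul, hji, hjj]
  rw [ha, hb, hab]

/-- Intersection criterion: two distinct lines in `H` intersect iff the span of their
defining cycles is anisotropic. -/
theorem intersection_criterion
    (B : LinearMap.BilinForm K E)
    (heuc : ∀ x : K, 0 ≤ x → ∃ y : K, y * y = x)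
    (hdim : Module.finrank K E = 2)
    (hsymm : ∀ x y : E, B x y = B y x)
    (hpos : ∀ x : E, x ≠ 0 → 0 < B x x)
    (i : E) (hi : B i i = 1)
    (l m : K × E × K) (hl : cyc B l l ≠ 0) (hm : cyc B m m ≠ 0)
    (hlp : cyc B l ((0 : K), i, (0 : K)) = 0)
    (hmp : cyc B m ((0 : K), i, (0 : K)) = 0)
    (hnotmul : (∀ c : K, l ≠ c • m) ∧ (∀ c : K, m ≠ c • l)) :
    (∃ w : E, B i w < 0 ∧ cyc B l (qc B w) = 0 ∧ cyc B m (qc B w) = 0) ↔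
      ∀ x y : K, (x, y) ≠ ((0 : K), (0 : K)) →
        cyc B (x • l + y • m) (x • l + y • m) ≠ 0 := by
  obtain ⟨j, hij, hjj, hrep⟩ := exists_ortho_basis' B heuc hdim hsymm hpos i hi
  have hji : B j i = 0 := by rw [hsymm]; exact hij
  obtain ⟨lA, lb, lC⟩ := l
  obtain ⟨mA, mb, mC⟩ := m
  have hlbi : B lb i = 0 := by simpa [cyc] using hlp
  have hmbi : B mb i = 0 := by simpa [cyc] using hmp
  have hlb : lb = B j lb • j := by
    conv_lhs => rw [hrep lb]
    rw [hsymm i lb, hlbi]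
    simp
  have hmb : mb = B j mb • j := by
    conv_lhs => rw [hrep mb]
    rw [hsymm i mb, hmbi]
    simp
  set lB := B j lb with hlBdef
  set mB := B j mb with hmBdef
  -- evaluation lemmas
  have hevalq : ∀ a c β s t : K,
      cyc B (a, β • j, c) (qc B (s • i + t • j)) = -2*(a*(s*s+t*t) + β*t + c) := by
    intro a c β s t
    simp only [cyc, qc, map_add, map_smul, map_neg, LinearMap.add_apply, LinearMap.smul_apply,
      LinearMap.neg_apply, smul_eq_mul, neg_smul, hi, hij, hji, hjj]
    ring
  have hevalself : ∀ a c β : K,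
      cyc B (a, β • j, c) (a, β • j, c) = β*β - 4*a*c := by
    intro a c β
    simp only [cyc, map_smul, LinearMap.smul_apply, smul_eq_mul, hjj]
    ring
  have hP : lB*lB - 4*lA*lC ≠ 0 := by
    intro h
    apply hl
    have := hevalself lA lC lB
    rw [← hlb] at this
    rw [this, h]
  have hS : mB*mB - 4*mA*mC ≠ 0 := by
    intro h
    apply hm
    have := hevalself mA mC mB
    rw [← hmb] at this
    rw [this, h]
  have hnp1 : ∀ c : K, ¬(lA = c*mA ∧ lB = c*mB ∧ lC = c*mC) := by
    rintro c ⟨h1, h2, h3⟩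
    apply hnotmul.1 c
    rw [hlb, hmb, h1, h2, h3]
    simp [Prod.smul_mk, smul_smul]
  have hcomb : ∀ x y : K,
      cyc B (x • (lA, lb, lC) + y • (mA, mb, mC)) (x • (lA, lb, lC) + y • (mA, mb, mC))
      = x*x*(lB*lB-4*lA*lC) + 2*(x*y)*(lB*mB-2*lA*mC-2*mA*lC) + y*y*(mB*mB-4*mA*mC) := by
    intro x y
    have hsum : x • (lA, lb, lC) + y • (mA, mb, mC)
        = ((x*lA+y*mA : K), ((x*lB+y*mB : K) • j : E), (x*lC+y*mC : K)) := by
      rw [hlb, hmb]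
      simp only [Prod.smul_mk, Prod.mk_add_mk, smul_eq_mul, Prod.mk.injEq]
      refine ⟨trivial, ?_, trivial⟩
      module
    rw [hsum, hevalself]
    ring
  have main := alg_core' heuc lA lB lC mA mB mC hP hS hnp1
  constructor
  · rintro ⟨w, hw, h1, h2⟩ x y hxy
    have hex : ∃ s t : K, s < 0 ∧ lA*(s*s+t*t)+lB*t+lC = 0 ∧ mA*(s*s+t*t)+mB*t+mC = 0 := by
      refine ⟨B i w, B j w, hw, ?_, ?_⟩
      · have hq := hevalq lA lC lB (B i w) (B j w)
        rw [← hlb, ← hrep w] at hq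
        rw [hq] at h1
        linarith
      · have hq := hevalq mA mC mB (B i w) (B j w)
        rw [← hmb, ← hrep w] at hq
        rw [hq] at h2
        linarith
    rw [hcomb x y]
    exact main.mp hex x y hxy
  · intro haniso
    have hex := main.mpr (fun x y hxy => by
      have := haniso x y hxy
      rw [hcomb x y] at this
      exact this)
    obtain ⟨s, t, hs, h1, h2⟩ := hex
    refine ⟨s • i + t • j, ?_, ?_, ?_⟩
    · have : B i (s • i + t • j) = s := by
        simp [map_add, map_smul, smul_eq_mul, hi, hij]
      rw [this]; exact hs
    · rw [hlb, hevalq]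
      linarith
    · rw [hmb, hevalq]
      linarith
end
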